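/- arXiv:2302.07993 — 8 statements merged into one kernel-verified Lean document; each statement's English description precedes it below -/
import Mathlib

section
/- Suppose ℓ, r : [0,∞) → ℝ satisfy dℓ/dt = (α/2) f((ℓ+r)/2) and dr/dt = −(β/2) f((ℓ+r)/2) with α, β > 0 and initial condition ℓ(0) < r(0), the solution being continued as long as ℓ(t) < r(t). Then the solutions meet in finite time: there exists T < ∞ with ℓ(T) = r(T). -/
open MeasureTheory Set Filter Topology Asymptotics

/-- Suppose ℓ, r are continuous on [0,∞), start with ℓ(0) < r(0), and satisfy
dℓ/dt = (α/2) f((ℓ+r)/2), dr/dt = −(β/2) f((ℓ+r)/2) (α, β > 0) as long as ℓ(t) < r(t).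
Then the solutions meet in finite time: ∃ T ≥ 0 with ℓ(T) = r(T). -/
theorem stmt_4
    (f : ℝ → ℝ)
    (hf_smooth : ContDiff ℝ 1 f)
    (hf_bdd : ∃ M, ∀ x, |f x| ≤ M)
    (hf'_bdd : ∃ M, ∀ x, |deriv f x| ≤ M)
    (hf_pos : ∀ x, 0 < f x)
    (hf_total : ∫ x, f x = 1)
    (hf_median : ∫ x in Iic (0 : ℝ), f x = 1 / 2)
    (α β : ℝ) (hα : 0 < α) (hβ : 0 < β)
    (ℓ r : ℝ → ℝ)
    (hℓcont : Continuous ℓ) (hrcont : Continuous r)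
    (hinit : ℓ 0 < r 0)
    (hℓ : ∀ t ∈ Ici (0 : ℝ), ℓ t < r t →
        HasDerivAt ℓ (α / 2 * f ((ℓ t + r t) / 2)) t)
    (hr : ∀ t ∈ Ici (0 : ℝ), ℓ t < r t →
        HasDerivAt r (-(β / 2) * f ((ℓ t + r t) / 2)) t) :
    ∃ T ∈ Ici (0 : ℝ), ℓ T = r T := by
  by_contra hcon
  push_neg at hcon
  -- ℓ t < r t for all t ≥ 0, by IVT
  have hlt : ∀ t ∈ Ici (0:ℝ), ℓ t < r t := by
    intro t ht
    by_contra hle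
    push_neg at hle
    have hne := hcon t ht
    have hgt : r t < ℓ t := lt_of_le_of_ne hle (fun h => hne h.symm)
    have hc : ContinuousOn (fun s => r s - ℓ s) (Icc 0 t) :=
      (hrcont.sub hℓcont).continuousOn
    have h0 : (0:ℝ) ∈ Icc (r t - ℓ t) (r 0 - ℓ 0) := ⟨by linarith, by linarith⟩
    obtain ⟨s, hs, hs0⟩ := intermediate_value_Icc' ht hc h0
    exact hcon s hs.1 (by simpa using (sub_eq_zero.mp hs0).symm)
  -- ℓ is monotone, r is antitone on Ici 0
  have hℓmono : MonotoneOn ℓ (Ici 0) := by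
    apply monotoneOn_of_deriv_nonneg (convex_Ici 0) hℓcont.continuousOn
    · intro x hx
      rw [interior_Ici] at hx
      exact ((hℓ x (mem_Ici.2 (le_of_lt hx)) (hlt x (mem_Ici.2 (le_of_lt hx)))).differentiableAt).differentiableWithinAt
    · intro x hx
      rw [interior_Ici] at hx
      rw [(hℓ x (mem_Ici.2 hx.le) (hlt x (mem_Ici.2 hx.le))).deriv]
      exact le_of_lt (mul_pos (by linarith) (hf_pos _))
  have hrmono : AntitoneOn r (Ici 0) := by
    apply antitoneOn_of_deriv_nonpos (convex_Ici 0) hrcont.continuousOn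
    · intro x hx
      rw [interior_Ici] at hx
      exact ((hr x (mem_Ici.2 (le_of_lt hx)) (hlt x (mem_Ici.2 (le_of_lt hx)))).differentiableAt).differentiableWithinAt
    · intro x hx
      rw [interior_Ici] at hx
      rw [(hr x (mem_Ici.2 hx.le) (hlt x (mem_Ici.2 hx.le))).deriv]
      have := hf_pos ((ℓ x + r x) / 2)
      nlinarith
  -- minimum of f on [ℓ 0, r 0]
  obtain ⟨x₀, hx₀, hmin'⟩ := isCompact_Icc.exists_isMinOn
    (nonempty_Icc.2 hinit.le) (hf_smooth.continuous.continuousOn (s := Icc (ℓ 0) (r 0)))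
  have hmin : ∀ y ∈ Icc (ℓ 0) (r 0), f x₀ ≤ f y := fun y hy => hmin' hy
  set c := f x₀ with hc
  have hcpos : 0 < c := hf_pos x₀
  set k := (α + β) / 2 * c with hk
  have hkpos : 0 < k := mul_pos (by linarith) hcpos
  -- midpoint stays in [ℓ 0, r 0]
  have hmid : ∀ x ∈ Ici (0:ℝ), c ≤ f ((ℓ x + r x) / 2) := by
    intro x hx
    apply hmin
    have h1 : ℓ 0 ≤ ℓ x := hℓmono (mem_Ici.2 (le_refl 0)) hx hx
    have h2 : r x ≤ r 0 := hrmono (mem_Ici.2 (le_refl 0)) hx hx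
    have h3 : ℓ x < r x := hlt x hx
    constructor <;> [linarith; linarith]
  -- the gap plus k*t is antitone
  have hanti : AntitoneOn (fun t => r t - ℓ t + k * t) (Ici 0) := by
    apply antitoneOn_of_deriv_nonpos (convex_Ici 0)
    · exact ((hrcont.sub hℓcont).add (continuous_const.mul continuous_id)).continuousOn
    · intro x hx
      rw [interior_Ici] at hx
      have hd : HasDerivAt (fun t => r t - ℓ t + k * t)
          (-(β / 2) * f ((ℓ x + r x) / 2) - α / 2 * f ((ℓ x + r x) / 2) + k * 1) x :=
        (((hr x (mem_Ici.2 hx.le) (hlt x (mem_Ici.2 hx.le))).sub (hℓ x (mem_Ici.2 hx.le) (hlt x (mem_Ici.2 hx.le)))).add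
          ((hasDerivAt_id x).const_mul k))
      exact hd.differentiableAt.differentiableWithinAt
    · intro x hx
      rw [interior_Ici] at hx
      have hd : HasDerivAt (fun t => r t - ℓ t + k * t)
          (-(β / 2) * f ((ℓ x + r x) / 2) - α / 2 * f ((ℓ x + r x) / 2) + k * 1) x :=
        (((hr x (mem_Ici.2 hx.le) (hlt x (mem_Ici.2 hx.le))).sub (hℓ x (mem_Ici.2 hx.le) (hlt x (mem_Ici.2 hx.le)))).add
          ((hasDerivAt_id x).const_mul k))
      rw [hd.deriv]
      have h1 := hmid x (mem_Ici.2 hx.le)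
      have h2 := hf_pos ((ℓ x + r x) / 2)
      rw [hk]
      nlinarith
  -- choose a large time
  set T := (r 0 - ℓ 0) / k + 1 with hT
  have hTpos : 0 < T := lt_of_lt_of_le one_pos (le_add_of_nonneg_left (div_nonneg (by linarith) hkpos.le))
  have hkT : r 0 - ℓ 0 < k * T := by
    rw [hT, mul_add, mul_one, mul_div_cancel₀ _ (ne_of_gt hkpos)]
    linarith
  have := hanti (mem_Ici.2 (le_refl (0:ℝ))) (le_of_lt hTpos : (0:ℝ) ≤ T) (le_of_lt hTpos)
  simp only [mul_zero, add_zero] at this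
  have hgap := hlt T (le_of_lt hTpos)
  linarith
end

section
/- For all real ℓ < r, the partial derivative of S_L with respect to ℓ exists and equals ∂S_L/∂ℓ(ℓ,r) = −(1/2) f((ℓ+r)/2) g((r−ℓ)/2) + ∫_{-∞}^{(ℓ+r)/2} f′(x) g(|ℓ−x|) dx. -/
open MeasureTheory Set Filter Topology Asymptotics

lemma shift_Iic (φ : ℝ → ℝ) (c t : ℝ) :
    ∫ x in Iic c, φ x = ∫ u in Iic (c - t), φ (u + t) := by
  rw [← integral_indicator measurableSet_Iic, ← integral_indicator measurableSet_Iic,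
    ← MeasureTheory.integral_add_right_eq_self (Set.indicator (Iic c) φ) t]
  congr 1
  funext u
  by_cases h : u + t ≤ c
  · rw [Set.indicator_of_mem (by simpa using h),
      Set.indicator_of_mem (by simpa [le_sub_iff_add_le] using h)]
  · rw [Set.indicator_of_notMem (by simpa using h),
      Set.indicator_of_notMem (by simpa [le_sub_iff_add_le] using h)]

/-- With abstentions modeled by `g(z) = g0(z/γ)`, the left candidate's vote share
`S_L(ℓ,r) = ∫_{-∞}^{(ℓ+r)/2} f(x) g(|ℓ−x|) dx` is differentiable in ℓ for ℓ < r, with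
`∂S_L/∂ℓ(ℓ,r) = −(1/2) f((ℓ+r)/2) g((r−ℓ)/2) + ∫_{-∞}^{(ℓ+r)/2} f′(x) g(|ℓ−x|) dx`. -/
theorem stmt_5
    (f : ℝ → ℝ)
    (hf_smooth : ContDiff ℝ 1 f)
    (hf_bdd : ∃ M, ∀ x, |f x| ≤ M)
    (hf'_bdd : ∃ M, ∀ x, |deriv f x| ≤ M)
    (hf_pos : ∀ x, 0 < f x)
    (hf_total : ∫ x, f x = 1)
    (hf_median : ∫ x in Iic (0 : ℝ), f x = 1 / 2)
    (g0 : ℝ → ℝ)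
    (hg0_cont : ContinuousOn g0 (Ici 0))
    (hg0_pos : ∀ z ∈ Ici (0 : ℝ), 0 < g0 z)
    (hg0_le_one : ∀ z ∈ Ici (0 : ℝ), g0 z ≤ 1)
    (hg0_anti : AntitoneOn g0 (Ici 0))
    (hg0_zero : g0 0 = 1)
    (hg0_decay : g0 =O[atTop] fun z => 1 / z ^ 2)
    (hg0_int : ∫ z in Ioi (0 : ℝ), g0 z = 1)
    (γ : ℝ) (hγ : 0 < γ)
    (ℓ r : ℝ) (hℓr : ℓ < r) :
    HasDerivAt (fun l => ∫ x in Iic ((l + r) / 2), f x * g0 (|l - x| / γ))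
      (-(1 / 2) * f ((ℓ + r) / 2) * g0 ((r - ℓ) / 2 / γ)
        + ∫ x in Iic ((ℓ + r) / 2), deriv f x * g0 (|ℓ - x| / γ)) ℓ := by
  obtain ⟨M', hM'⟩ := hf'_bdd
  have hM'0 : 0 ≤ M' := (abs_nonneg _).trans (hM' 0)
  set ψ : ℝ → ℝ := fun u => g0 (|u| / γ) with hψ_def
  have hmem : ∀ u : ℝ, |u| / γ ∈ Ici (0:ℝ) := fun u => div_nonneg (abs_nonneg u) hγ.le
  have hψ_cont : Continuous ψ := hg0_cont.comp_continuous (by continuity) hmem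
  have hψ_le1 : ∀ u, ψ u ≤ 1 := fun u => hg0_le_one _ (hmem u)
  have hψ_nonneg : ∀ u, 0 ≤ ψ u := fun u => (hg0_pos _ (hmem u)).le
  have hg0_integrable : IntegrableOn g0 (Ioi (0:ℝ)) := by
    by_contra h
    rw [integral_undef h] at hg0_int
    norm_num at hg0_int
  have hψ_int : Integrable ψ := by
    set h1 : ℝ → ℝ := (Ioi (0:ℝ)).indicator g0 with hh1
    have h1_int : Integrable h1 := (integrable_indicator_iff measurableSet_Ioi).2 hg0_integrable
    have h2 : Integrable (fun u : ℝ => h1 (u / γ)) := h1_int.comp_div hγ.ne'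
    have h3 : Integrable (fun u : ℝ => h1 (-u / γ)) := by
      have := h2.comp_neg
      simpa [neg_div] using this
    refine (h2.add h3).congr ?_
    have key : ∀ u : ℝ, u ≠ 0 → h1 (u / γ) + h1 (-u / γ) = ψ u := by
      intro u hu
      rcases lt_or_gt_of_ne hu with hlt | hgt
      · have e1 : h1 (u / γ) = 0 :=
          Set.indicator_of_notMem (by simp [not_lt.2 (div_nonpos_of_nonpos_of_nonneg hlt.le hγ.le)]) _
        have e2 : h1 (-u / γ) = g0 (-u / γ) :=
          Set.indicator_of_mem (by exact div_pos (by linarith) hγ) _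
        rw [e1, e2, hψ_def]
        simp [abs_of_neg hlt]
      · have e1 : h1 (u / γ) = g0 (u / γ) :=
          Set.indicator_of_mem (div_pos hgt hγ) _
        have e2 : h1 (-u / γ) = 0 :=
          Set.indicator_of_notMem
            (by simp [not_lt.2 (div_nonpos_of_nonpos_of_nonneg (by linarith : -u ≤ 0) hγ.le)]) _
        rw [e1, e2, hψ_def]
        simp [abs_of_pos hgt]
    filter_upwards [compl_mem_ae_iff.2 (Real.volume_singleton (a := (0:ℝ)))] with u hu
    exact key u hu
  -- continuity / differentiability of f
  have hf_cont : Continuous f := hf_smooth.continuous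
  have hf'_cont : Continuous (deriv f) := hf_smooth.continuous_deriv le_rfl
  have hf_diff : ∀ x, HasDerivAt f (deriv f x) x := fun x =>
    ((hf_smooth.differentiable one_ne_zero) x).hasDerivAt
  obtain ⟨Mf, hMf⟩ := hf_bdd
  -- integrability of the products
  have hφ_int : ∀ t : ℝ, Integrable (fun u => f (u + t) * ψ u) := by
    intro t
    exact hψ_int.bdd_mul (c := Mf) ((hf_cont.comp (by continuity)).aestronglyMeasurable)
      (Filter.Eventually.of_forall fun u => by simpa [Real.norm_eq_abs] using hMf (u + t))
  have hφ'_int : Integrable (fun u => deriv f (u + ℓ) * ψ u) :=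
    hψ_int.bdd_mul (c := M') ((hf'_cont.comp (by continuity)).aestronglyMeasurable)
      (Filter.Eventually.of_forall fun u => by simpa [Real.norm_eq_abs] using hM' (u + ℓ))
  -- Lipschitz property of f
  have hlip : ∀ a b : ℝ, |f a - f b| ≤ M' * |a - b| := by
    intro a b
    have := Convex.norm_image_sub_le_of_norm_deriv_le
      (fun x _ => (hf_smooth.differentiable one_ne_zero) x)
      (fun x _ => by simpa [Real.norm_eq_abs] using hM' x) convex_univ (mem_univ b) (mem_univ a)
    simpa [Real.norm_eq_abs] using this
  set b0 : ℝ := (r - ℓ) / 2 with hb0_def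
  have hb0 : 0 < b0 := by simp [hb0_def]; linarith
  set φ0 : ℝ → ℝ := fun u => f (u + ℓ) * ψ u with hφ0_def
  have hφ0_cont : Continuous φ0 := (hf_cont.comp (by continuity)).mul hψ_cont
  set Φ : ℝ → ℝ := fun c => ∫ u in Iic c, φ0 u with hΦ_def
  -- FTC part: derivative of Φ at b0 is φ0 b0
  have hΦ_eq : ∀ c, Φ c = Φ b0 + ∫ u in b0..c, φ0 u := by
    intro c
    rw [← intervalIntegral.integral_Iic_sub_Iic ((hφ_int ℓ).integrableOn) ((hφ_int ℓ).integrableOn)]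
    ring
  have hΦ_deriv : HasDerivAt Φ (φ0 b0) b0 := by
    have h1 : HasDerivAt (fun c => Φ b0 + ∫ u in b0..c, φ0 u) (φ0 b0) b0 := by
      refine HasDerivAt.const_add _ ?_
      exact intervalIntegral.integral_hasDerivAt_right
        ((hφ_int ℓ).intervalIntegrable)
        (hφ0_cont.stronglyMeasurable.stronglyMeasurableAtFilter)
        hφ0_cont.continuousAt
    exact h1.congr_of_eventuallyEq (Filter.Eventually.of_forall fun c => (hΦ_eq c))
  -- G1 : composition with l ↦ (r - l)/2
  have hbr : HasDerivAt (fun l : ℝ => (r - l) / 2) (-(1/2) : ℝ) ℓ := by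
    have : HasDerivAt (fun l : ℝ => (r - l) / 2) ((-1)/2) ℓ :=
      ((hasDerivAt_id ℓ).const_sub r).div_const 2
    convert this using 1; norm_num
  have hG1 : HasDerivAt (fun l => Φ ((r - l) / 2)) (φ0 b0 * (-(1/2))) ℓ := by
    have := HasDerivAt.comp ℓ (by simpa [hb0_def] using hΦ_deriv) hbr
    simpa [Function.comp_def, mul_comm, hb0_def] using this
  -- G2 : parametric integral over fixed domain
  have hG2 : HasDerivAt (fun l => ∫ u in Iic b0, f (u + l) * ψ u)
      (∫ u in Iic b0, deriv f (u + ℓ) * ψ u) ℓ := by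
    have := hasDerivAt_integral_of_dominated_loc_of_deriv_le
      (F := fun (l : ℝ) (u : ℝ) => f (u + l) * ψ u)
      (F' := fun (l : ℝ) (u : ℝ) => deriv f (u + l) * ψ u)
      (μ := volume.restrict (Iic b0)) (x₀ := ℓ)
      (bound := fun u => M' * ψ u) (s := univ) univ_mem
      (Filter.Eventually.of_forall fun l => (hφ_int l).aestronglyMeasurable.restrict)
      ((hφ_int ℓ).integrableOn)
      (hφ'_int.aestronglyMeasurable.restrict)
      (Filter.Eventually.of_forall fun u l _ => by
        have : |deriv f (u + l)| * ψ u ≤ M' * ψ u :=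
          mul_le_mul_of_nonneg_right (hM' _) (hψ_nonneg u)
        simpa [Real.norm_eq_abs, abs_mul, abs_of_nonneg (hψ_nonneg u)] using this)
      ((hψ_int.const_mul M').restrict)
      (Filter.Eventually.of_forall fun u l _ => by
        have h1 : HasDerivAt (fun l : ℝ => f (u + l)) (deriv f (u + l)) l := by
          have := HasDerivAt.comp l (hf_diff (u + l)) ((hasDerivAt_id l).const_add u)
          simpa [Function.comp_def] using this
        simpa using h1.mul_const (ψ u))
    exact this.2
  -- remainder term
  set R : ℝ → ℝ := fun l => ∫ u in b0..((r - l)/2), (f (u + l) - f (u + ℓ)) * ψ u with hR_def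
  have hR0 : R ℓ = 0 := by
    simp [hR_def, ← hb0_def, intervalIntegral.integral_same]
  have hR : HasDerivAt R 0 ℓ := by
    rw [hasDerivAt_iff_isLittleO]
    have hbound : ∀ l : ℝ, ‖R l‖ ≤ M' * |l - ℓ| * (|l - ℓ| / 2) := by
      intro l
      have h1 : ∀ u ∈ Set.uIoc b0 ((r - l)/2), ‖(f (u + l) - f (u + ℓ)) * ψ u‖ ≤ M' * |l - ℓ| := by
        intro u _
        rw [Real.norm_eq_abs, abs_mul]
        calc |f (u + l) - f (u + ℓ)| * |ψ u| ≤ (M' * |l - ℓ|) * 1 := by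
              apply mul_le_mul
              · have := hlip (u + l) (u + ℓ)
                simpa [add_sub_add_left_eq_sub] using this
              · rw [abs_of_nonneg (hψ_nonneg u)]; exact hψ_le1 u
              · exact abs_nonneg _
              · positivity
          _ = M' * |l - ℓ| := by ring
      have h2 := intervalIntegral.norm_integral_le_of_norm_le_const h1
      have h3 : |(r - l)/2 - b0| = |l - ℓ| / 2 := by
        rw [hb0_def]
        rw [show (r - l)/2 - (r - ℓ)/2 = -((l - ℓ)/2) by ring, abs_neg, abs_div]
        norm_num
      calc ‖R l‖ ≤ M' * |l - ℓ| * |(r - l)/2 - b0| := h2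
        _ = M' * |l - ℓ| * (|l - ℓ| / 2) := by rw [h3]
    have hO : (fun l => R l - R ℓ - (l - ℓ) • (0:ℝ)) =O[𝓝 ℓ] fun l => (l - ℓ) * (l - ℓ) := by
      rw [isBigO_iff]
      refine ⟨M' / 2, Filter.Eventually.of_forall fun l => ?_⟩
      rw [hR0]
      simp only [smul_eq_mul, mul_zero, sub_zero]
      calc ‖R l‖ ≤ M' * |l - ℓ| * (|l - ℓ| / 2) := hbound l
        _ = M' / 2 * ‖(l - ℓ) * (l - ℓ)‖ := by
            rw [Real.norm_eq_abs, abs_mul]; ring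
    refine hO.trans_isLittleO ?_
    have h1 : (fun l : ℝ => l - ℓ) =o[𝓝 ℓ] (fun _ => (1:ℝ)) := by
      rw [isLittleO_one_iff]
      have : Tendsto (fun l : ℝ => l - ℓ) (𝓝 ℓ) (𝓝 (ℓ - ℓ)) :=
        (continuous_id.sub continuous_const).tendsto ℓ
      simpa using this
    have := h1.mul_isBigO (isBigO_refl (fun l : ℝ => l - ℓ) (𝓝 ℓ))
    simpa using this
  -- key decomposition
  have key : ∀ l : ℝ, (∫ x in Iic ((l + r) / 2), f x * g0 (|l - x| / γ)) =
      (∫ u in Iic b0, f (u + l) * ψ u) + (Φ ((r - l)/2) - Φ b0) + R l := by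
    intro l
    have shift1 : (∫ x in Iic ((l + r) / 2), f x * g0 (|l - x| / γ)) =
        ∫ u in Iic ((r - l)/2), f (u + l) * ψ u := by
      rw [shift_Iic (fun x => f x * g0 (|l - x| / γ)) ((l + r)/2) l]
      rw [show (l + r)/2 - l = (r - l)/2 by ring]
      congr 1
      funext u
      rw [hψ_def]
      congr 2
      rw [show l - (u + l) = -u by ring, abs_neg]
    have split1 : (∫ u in Iic ((r - l)/2), f (u + l) * ψ u) =
        (∫ u in Iic b0, f (u + l) * ψ u) + ∫ u in b0..((r - l)/2), f (u + l) * ψ u := by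
      rw [← intervalIntegral.integral_Iic_sub_Iic ((hφ_int l).integrableOn) ((hφ_int l).integrableOn)]
      ring
    have hg_int : Integrable (fun u => (f (u + l) - f (u + ℓ)) * ψ u) := by
      refine ((hφ_int l).sub (hφ_int ℓ)).congr (Filter.Eventually.of_forall fun u => ?_)
      simp only [Pi.sub_apply]
      ring
    have split2 : (∫ u in b0..((r - l)/2), f (u + l) * ψ u) =
        (∫ u in b0..((r - l)/2), φ0 u) + R l := by
      rw [hR_def, hφ0_def, ← intervalIntegral.integral_add
        (((hφ_int ℓ)).intervalIntegrable)
        (hg_int.intervalIntegrable)]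
      congr 1
      funext u
      ring
    have split3 : (∫ u in b0..((r - l)/2), φ0 u) = Φ ((r - l)/2) - Φ b0 := by
      rw [hΦ_def]
      exact (intervalIntegral.integral_Iic_sub_Iic ((hφ_int ℓ).integrableOn) ((hφ_int ℓ).integrableOn)).symm
    rw [shift1, split1, split2, split3]
    ring
  -- assemble
  have hsum : HasDerivAt (fun l => (∫ u in Iic b0, f (u + l) * ψ u) + (Φ ((r - l)/2) - Φ b0) + R l)
      ((∫ u in Iic b0, deriv f (u + ℓ) * ψ u) + (φ0 b0 * (-(1/2))) + 0) ℓ :=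
    (hG2.add (hG1.sub_const (Φ b0))).add hR
  have heq : (fun l => ∫ x in Iic ((l + r) / 2), f x * g0 (|l - x| / γ)) =
      fun l => (∫ u in Iic b0, f (u + l) * ψ u) + (Φ ((r - l)/2) - Φ b0) + R l :=
    funext key
  rw [heq]
  convert hsum using 1
  -- value equality
  have shift2 : (∫ x in Iic ((ℓ + r) / 2), deriv f x * g0 (|ℓ - x| / γ)) =
      ∫ u in Iic b0, deriv f (u + ℓ) * ψ u := by
    rw [shift_Iic (fun x => deriv f x * g0 (|ℓ - x| / γ)) ((ℓ + r)/2) ℓ]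
    rw [show (ℓ + r)/2 - ℓ = b0 by rw [hb0_def]; ring]
    congr 1
    funext u
    rw [hψ_def]
    congr 2
    rw [show ℓ - (u + ℓ) = -u by ring, abs_neg]
  rw [shift2, hφ0_def]
  have e1 : b0 + ℓ = (ℓ + r)/2 := by rw [hb0_def]; ring
  have e2 : ψ b0 = g0 ((r - ℓ)/2/γ) := by
    rw [hψ_def]; simp only []
    rw [abs_of_pos hb0, hb0_def]
  simp only [e1, e2]
  ring
end

section
/- For all real ℓ < r, ∂S_L/∂ℓ(ℓ,r) = −(1/2) f((ℓ+r)/2) g_0((r−ℓ)/(2γ)) + γ ∫_{−(r−ℓ)/(2γ)}^{∞} f′(ℓ − γu) g_0(|u|) du. -/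
open MeasureTheory Set Filter Topology Asymptotics

private lemma abs_comp_integrable {w0 : ℝ → ℝ} (hmeas : Continuous fun u => w0 |u|)
    (hint : IntegrableOn w0 (Ioi 0)) : Integrable (fun u => w0 |u|) := by
  have hIoi : IntegrableOn (fun u => w0 |u|) (Ioi 0) := by
    refine hint.congr_fun (fun x hx => ?_) measurableSet_Ioi
    rw [abs_of_pos hx]
  have hIic : IntegrableOn (fun u => w0 |u|) (Iic 0) := by
    rw [← Measure.map_neg_eq_self (volume : Measure ℝ)]
    have m : MeasurableEmbedding fun x : ℝ => -x := (Homeomorph.neg ℝ).measurableEmbedding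
    rw [m.integrableOn_map_iff]
    simp_rw [Function.comp_def, abs_neg, neg_preimage, neg_Iic, neg_zero]
    exact Iff.mpr integrableOn_Ici_iff_integrableOn_Ioi hIoi
  have : IntegrableOn (fun u => w0 |u|) (Iic 0 ∪ Ioi 0) := hIic.union hIoi
  rwa [Iic_union_Ioi, integrableOn_univ] at this

private lemma param_deriv {f w : ℝ → ℝ} (hf : ContDiff ℝ 1 f) (M' : ℝ)
    (hM' : ∀ x, |deriv f x| ≤ M') (hw : Continuous w) (hw0 : ∀ u, 0 ≤ w u)
    (γ x₀ : ℝ) (μ : Measure ℝ)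
    (hint : Integrable (fun u => f (x₀ - γ * u) * w u) μ)
    (hint' : Integrable (fun u => deriv f (x₀ - γ * u) * w u) μ)
    (hbound : Integrable (fun u => M' * w u) μ) :
    HasDerivAt (fun l => ∫ u, f (l - γ * u) * w u ∂μ)
      (∫ u, deriv f (x₀ - γ * u) * w u ∂μ) x₀ := by
  have hfc : Continuous f := hf.continuous
  have hf'c : Continuous (deriv f) := hf.continuous_deriv le_rfl
  have key := hasDerivAt_integral_of_dominated_loc_of_deriv_le (μ := μ)
      (F := fun l u => f (l - γ * u) * w u) (F' := fun l u => deriv f (l - γ * u) * w u)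
      (x₀ := x₀) (bound := fun u => M' * w u) (Metric.ball_mem_nhds x₀ zero_lt_one)
      (Filter.Eventually.of_forall fun l =>
        ((hfc.comp (continuous_const.sub (continuous_const.mul continuous_id))).mul
          hw).aestronglyMeasurable)
      hint
      ((hf'c.comp (continuous_const.sub (continuous_const.mul continuous_id))).mul
          hw).aestronglyMeasurable
      (ae_of_all _ fun u l _ => by
        rw [Real.norm_eq_abs, abs_mul, abs_of_nonneg (hw0 u)]
        exact mul_le_mul_of_nonneg_right (hM' _) (hw0 u))
      hbound
      (ae_of_all _ fun u l _ => by
        have h1 : HasDerivAt (fun x : ℝ => x - γ * u) 1 l := (hasDerivAt_id l).sub_const _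
        have h2 : HasDerivAt f (deriv f (l - γ * u)) (l - γ * u) :=
          (hf.differentiable one_ne_zero _).hasDerivAt
        have h3 := h2.comp l h1
        rw [mul_one] at h3
        exact h3.mul_const (w u))
  exact key.2

/-- For ℓ < r, after the substitution u = (ℓ−x)/γ,
`∂S_L/∂ℓ(ℓ,r) = −(1/2) f((ℓ+r)/2) g0((r−ℓ)/(2γ)) + γ ∫_{−(r−ℓ)/(2γ)}^{∞} f′(ℓ−γu) g0(|u|) du`. -/
theorem stmt_6
    (f : ℝ → ℝ)
    (hf_smooth : ContDiff ℝ 1 f)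
    (hf_bdd : ∃ M, ∀ x, |f x| ≤ M)
    (hf'_bdd : ∃ M, ∀ x, |deriv f x| ≤ M)
    (hf_pos : ∀ x, 0 < f x)
    (hf_total : ∫ x, f x = 1)
    (hf_median : ∫ x in Iic (0 : ℝ), f x = 1 / 2)
    (g0 : ℝ → ℝ)
    (hg0_cont : ContinuousOn g0 (Ici 0))
    (hg0_pos : ∀ z ∈ Ici (0 : ℝ), 0 < g0 z)
    (hg0_le_one : ∀ z ∈ Ici (0 : ℝ), g0 z ≤ 1)
    (hg0_anti : AntitoneOn g0 (Ici 0))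
    (hg0_zero : g0 0 = 1)
    (hg0_decay : g0 =O[atTop] fun z => 1 / z ^ 2)
    (hg0_int : ∫ z in Ioi (0 : ℝ), g0 z = 1)
    (γ : ℝ) (hγ : 0 < γ)
    (ℓ r : ℝ) (hℓr : ℓ < r) :
    HasDerivAt (fun l => ∫ x in Iic ((l + r) / 2), f x * g0 (|l - x| / γ))
      (-(1 / 2) * f ((ℓ + r) / 2) * g0 ((r - ℓ) / (2 * γ))
        + γ * ∫ u in Ioi (-((r - ℓ) / (2 * γ))), deriv f (ℓ - γ * u) * g0 |u|) ℓ := by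
  obtain ⟨M, hM⟩ := hf_bdd
  obtain ⟨M', hM'⟩ := hf'_bdd
  have hγ' : γ ≠ 0 := hγ.ne'
  have hfc : Continuous f := hf_smooth.continuous
  have hf'c : Continuous (deriv f) := hf_smooth.continuous_deriv le_rfl
  set w : ℝ → ℝ := fun u => g0 |u| with hw_def
  have hw_cont : Continuous w := hg0_cont.comp_continuous continuous_abs fun x => abs_nonneg x
  have hw_nonneg : ∀ u, 0 ≤ w u := fun u => (hg0_pos _ (abs_nonneg u)).le
  have hg0_Ioi : IntegrableOn g0 (Ioi 0) := by
    by_contra h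
    rw [MeasureTheory.integral_undef h] at hg0_int
    norm_num at hg0_int
  have hw_int : Integrable w := abs_comp_integrable hw_cont hg0_Ioi
  -- integrability of products
  have key_int : ∀ (φ : ℝ → ℝ), Continuous φ → ∀ C : ℝ, (∀ x, |φ x| ≤ C) →
      ∀ l : ℝ, Integrable (fun u => φ (l - γ * u) * w u) := fun φ hφ C hC l =>
    hw_int.bdd_mul
      ((hφ.comp (continuous_const.sub (continuous_const.mul continuous_id))).aestronglyMeasurable)
      (ae_of_all _ fun u => by rw [Real.norm_eq_abs]; exact hC _)
  have hFi : ∀ l : ℝ, Integrable (fun u => f (l - γ * u) * w u) := key_int f hfc M hM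
  have hF'i : ∀ l : ℝ, Integrable (fun u => deriv f (l - γ * u) * w u) := key_int _ hf'c M' hM'
  set s0 : ℝ := (ℓ - r) / (2 * γ) with hs0_def
  have hs0_neg : s0 < 0 := div_neg_of_neg_of_pos (by linarith) (by linarith)
  have hmid : ℓ - γ * s0 = (ℓ + r) / 2 := by rw [hs0_def]; field_simp; ring
  set c : ℝ := f ((ℓ + r) / 2) * g0 ((r - ℓ) / (2 * γ)) with hc_def
  have hws0 : w s0 = g0 ((r - ℓ) / (2 * γ)) := by
    rw [hw_def]
    simp only []
    rw [abs_of_neg hs0_neg, hs0_def]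
    ring_nf
  -- substitution formula
  have subst : ∀ l a : ℝ, γ * ∫ u in Ioi a, f (l - γ * u) * w u
      = ∫ x in Iic (l - γ * a), f x * w ((l - x) / γ) := by
    intro l a
    have h1 := integral_comp_mul_left_Ioi (fun v => f (l - v) * w (v / γ)) a hγ
    simp only [mul_div_cancel_left₀ _ hγ'] at h1
    have h2 := integral_comp_neg_Ioi (γ * a) (fun y => f (l + y) * w (-y / γ))
    simp only [neg_neg, ← sub_eq_add_neg] at h2
    have h3 : ∫ y in Iic (-(γ * a)), f (l + y) * w (-y / γ)
        = ∫ x in Iic (l - γ * a), f x * w ((l - x) / γ) := by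
      have mp := measurePreserving_add_right (volume : Measure ℝ) l
      have me : MeasurableEmbedding (fun y : ℝ => y + l) :=
        (Homeomorph.addRight l).measurableEmbedding
      have h4 := mp.setIntegral_preimage_emb me
        (fun x => f x * w ((l - x) / γ)) (Iic (l - γ * a))
      rw [preimage_add_const_Iic] at h4
      have h5 : l - γ * a - l = -(γ * a) := by ring
      rw [h5] at h4
      rw [← h4]
      refine setIntegral_congr_fun measurableSet_Iic fun y _ => ?_
      have e1 : y + l = l + y := by ring
      rw [e1, show l - (l + y) = -y from by ring]
    rw [h1, h2, h3, smul_eq_mul, ← mul_assoc, mul_inv_cancel₀ hγ', one_mul]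
  -- reduce the target function
  have hsplit : (fun l => ∫ x in Iic ((l + r) / 2), f x * g0 (|l - x| / γ))
      = fun l => γ * (∫ u, f (l - γ * u) * w u)
        - γ * ((∫ u in Iic s0, f (l - γ * u) * w u)
          + ∫ u in s0..((l - r) / (2 * γ)), f (l - γ * u) * w u) := by
    funext l
    have e1 : ∀ x : ℝ, g0 (|l - x| / γ) = w ((l - x) / γ) := by
      intro x
      rw [hw_def]
      simp only []
      rw [abs_div, abs_of_pos hγ]
    have e3 : l - γ * ((l - r) / (2 * γ)) = (l + r) / 2 := by field_simp; ring
    have e2 := subst l ((l - r) / (2 * γ))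
    rw [e3] at e2
    have e4 := intervalIntegral.integral_Iic_add_Ioi (b := (l - r) / (2 * γ)) (μ := volume)
      (hFi l).integrableOn (hFi l).integrableOn
    have e5 := intervalIntegral.integral_Iic_sub_Iic (f := fun u => f (l - γ * u) * w u) (μ := volume)
      (a := s0) (b := (l - r) / (2 * γ)) (hFi l).integrableOn (hFi l).integrableOn
    simp only [e1]
    rw [← e2]
    have e6 : (∫ u in Iic ((l - r) / (2 * γ)), f (l - γ * u) * w u)
        = (∫ u in Iic s0, f (l - γ * u) * w u)
          + ∫ u in s0..((l - r) / (2 * γ)), f (l - γ * u) * w u := by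
      rw [← e5]; ring
    rw [← e6]
    nlinarith [e4]
  rw [hsplit]
  -- derivative of the full-line part
  have hA : HasDerivAt (fun l => ∫ u, f (l - γ * u) * w u)
      (∫ u, deriv f (ℓ - γ * u) * w u) ℓ :=
    param_deriv hf_smooth M' hM' hw_cont hw_nonneg γ ℓ volume (hFi ℓ) (hF'i ℓ)
      (hw_int.const_mul M')
  -- derivative of the fixed-boundary part
  have hΦ : HasDerivAt (fun l => ∫ u in Iic s0, f (l - γ * u) * w u)
      (∫ u in Iic s0, deriv f (ℓ - γ * u) * w u) ℓ :=
    param_deriv hf_smooth M' hM' hw_cont hw_nonneg γ ℓ (volume.restrict (Iic s0))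
      (hFi ℓ).integrableOn (hF'i ℓ).integrableOn ((hw_int.const_mul M').integrableOn)
  -- derivative of the moving-boundary part
  have hG : HasDerivAt (fun l => ∫ u in s0..((l - r) / (2 * γ)), f (l - γ * u) * w u)
      (c / (2 * γ)) ℓ := by
    rw [hasDerivAt_iff_isLittleO, isLittleO_iff]
    intro ε hε
    have hH : ContinuousAt (fun p : ℝ × ℝ => f (p.1 - γ * p.2) * w p.2) (ℓ, s0) :=
      ((hfc.comp ((continuous_fst.sub (continuous_const.mul continuous_snd)))).mul
        (hw_cont.comp continuous_snd)).continuousAt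
    have hHval : f (ℓ - γ * s0) * w s0 = c := by rw [hmid, hws0, hc_def]
    rw [Metric.continuousAt_iff] at hH
    obtain ⟨δ, hδ, hball⟩ := hH (γ * ε) (by positivity)
    have hδ1 : 0 < min δ (γ * δ) := lt_min hδ (by positivity)
    rw [Metric.eventually_nhds_iff]
    refine ⟨min δ (γ * δ), hδ1, fun l hl => ?_⟩
    rw [Real.dist_eq] at hl
    set sl : ℝ := (l - r) / (2 * γ) with hsl_def
    have hsd : sl - s0 = (l - ℓ) / (2 * γ) := by rw [hsl_def, hs0_def]; ring
    have hsd' : |sl - s0| = |l - ℓ| / (2 * γ) := by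
      rw [hsd, abs_div, abs_of_pos (show (0:ℝ) < 2 * γ by linarith)]
    have hsdlt : |sl - s0| < δ := by
      rw [hsd']
      have h1 : |l - ℓ| < γ * δ := lt_of_lt_of_le hl (min_le_right _ _)
      rw [div_lt_iff₀ (by linarith)]
      nlinarith [abs_nonneg (l - ℓ)]
    -- pointwise bound on the interval
    have hbd : ∀ u ∈ Set.uIoc s0 sl, ‖f (l - γ * u) * w u - c‖ ≤ γ * ε := by
      intro u hu
      have hu' : |u - s0| ≤ |sl - s0| := by
        rw [Set.mem_uIoc] at hu
        rcases hu with ⟨h1, h2⟩ | ⟨h1, h2⟩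
        · rw [abs_of_pos (by linarith), abs_of_pos (by linarith)]; linarith
        · rw [abs_of_nonpos (by linarith), abs_of_neg (by linarith)]; linarith
      have hdist : dist (l, u) (ℓ, s0) < δ := by
        rw [Prod.dist_eq]
        apply max_lt
        · rw [Real.dist_eq]; exact lt_of_lt_of_le hl (min_le_left _ _)
        · rw [Real.dist_eq]; exact lt_of_le_of_lt hu' hsdlt
      have := hball hdist
      rw [Real.dist_eq, hHval] at this
      exact (le_of_lt this)
    have hii : IntervalIntegrable (fun u => f (l - γ * u) * w u) volume s0 sl :=
      (hFi l).intervalIntegrable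
    have hsub : (∫ u in s0..sl, f (l - γ * u) * w u) - (l - ℓ) • (c / (2 * γ))
        = ∫ u in s0..sl, (f (l - γ * u) * w u - c) := by
      rw [intervalIntegral.integral_sub hii (intervalIntegrable_const),
        intervalIntegral.integral_const, hsd, smul_eq_mul, smul_eq_mul]
      field_simp
    have hnorm := intervalIntegral.norm_integral_le_of_norm_le_const hbd
    rw [← hs0_def]
    simp only [intervalIntegral.integral_same, sub_zero]
    rw [hsub]
    calc ‖∫ u in s0..sl, (f (l - γ * u) * w u - c)‖ ≤ γ * ε * |sl - s0| := hnorm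
      _ = γ * ε * (|l - ℓ| / (2 * γ)) := by rw [hsd']
      _ ≤ ε * |l - ℓ| := by
          rw [div_eq_mul_inv]
          have : γ * ε * (|l - ℓ| * (2 * γ)⁻¹) = (ε * |l - ℓ|) / 2 := by
            field_simp
          rw [this]
          linarith [mul_nonneg hε.le (abs_nonneg (l - ℓ))]
      _ = ε * ‖l - ℓ‖ := by rw [Real.norm_eq_abs]
  -- assemble
  have hcomb := (hA.const_mul γ).sub ((hΦ.add hG).const_mul γ)
  convert hcomb using 1
  case e'_4 => rfl
  case e'_5 => rfl
  · rfl
  have hs0eq : -((r - ℓ) / (2 * γ)) = s0 := by rw [hs0_def]; ring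
  rw [hs0eq]
  have hsum := intervalIntegral.integral_Iic_add_Ioi (b := s0) (μ := volume)
    (hF'i ℓ).integrableOn (hF'i ℓ).integrableOn
  have : (∫ u in Ioi s0, deriv f (ℓ - γ * u) * w u)
      = (∫ u, deriv f (ℓ - γ * u) * w u) - ∫ u in Iic s0, deriv f (ℓ - γ * u) * w u := by
    rw [← hsum]; ring
  rw [hw_def] at this ⊢
  rw [this]
  have hcval : c = f ((ℓ + r) / 2) * g0 ((r - ℓ) / (2 * γ)) := hc_def
  field_simp
  ring
end

section
/- For all real ℓ < r, the partial derivative of S_R with respect to r exists and equals ∂S_R/∂r(ℓ,r) = (1/2) f((ℓ+r)/2) g((r−ℓ)/2) + ∫_{(ℓ+r)/2}^{∞} f′(x) g(|r−x|) dx. -/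
open MeasureTheory Set Filter Topology Asymptotics

lemma my_integral_Ioi_shift (h : ℝ → ℝ) (c : ℝ) :
    ∫ x in Ioi c, h (x - c) = ∫ u in Ioi (0:ℝ), h u := by
  rw [← integral_indicator measurableSet_Ioi, ← integral_indicator measurableSet_Ioi]
  rw [← integral_add_right_eq_self (fun x => (Ioi c).indicator (fun y => h (y - c)) x) c]
  congr 1
  ext x
  by_cases hx : 0 < x
  · simp [Set.indicator_apply, hx, lt_add_iff_pos_left]
  · simp [Set.indicator_apply, hx, lt_add_iff_pos_left]

lemma my_integrableOn_Ioi_shift {h : ℝ → ℝ} (c : ℝ) (hi : IntegrableOn h (Ioi (0:ℝ))) :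
    IntegrableOn (fun x => h (x - c)) (Ioi c) := by
  rw [← integrable_indicator_iff measurableSet_Ioi] at hi ⊢
  have := hi.comp_sub_right c
  refine this.congr (Eventually.of_forall fun x => ?_)
  by_cases hx : c < x
  · simp [Set.indicator_apply, hx, sub_pos.2 hx]
  · simp [Set.indicator_apply, hx, fun hh => hx (sub_pos.mp hh)]

lemma my_split {g0 : ℝ → ℝ} (hg0_cont : ContinuousOn g0 (Ici 0))
    (hg0_pos : ∀ z ∈ Ici (0 : ℝ), 0 < g0 z)
    {γ : ℝ} (hγ : 0 < γ)
    (hInt : IntegrableOn (fun u => g0 (u / γ)) (Ioi (0:ℝ)))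
    {φ : ℝ → ℝ} (hφc : Continuous φ) {M : ℝ} (hM : ∀ x, |φ x| ≤ M)
    {ℓ r' : ℝ} (h : ℓ < r') :
    ∫ x in Ioi ((ℓ + r') / 2), φ x * g0 (|r' - x| / γ)
      = (∫ u in (0:ℝ)..((r' - ℓ) / 2), φ (r' - u) * g0 (u / γ))
        + ∫ u in Ioi (0:ℝ), φ (r' + u) * g0 (u / γ) := by
  set a : ℝ := (ℓ + r') / 2 with ha
  have har : a < r' := by rw [ha]; linarith
  have hgc : Continuous (fun x => g0 (|r' - x| / γ)) := by
    apply hg0_cont.comp_continuous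
    · exact (continuous_const.sub continuous_id).abs.div_const γ
    · intro x; exact div_nonneg (abs_nonneg _) hγ.le
  have hc : Continuous (fun x => φ x * g0 (|r' - x| / γ)) := hφc.mul hgc
  -- integrability on the two pieces
  have hi1 : IntegrableOn (fun x => φ x * g0 (|r' - x| / γ)) (Ioc a r') :=
    (hc.integrableOn_Icc).mono_set Ioc_subset_Icc_self
  have hshift : IntegrableOn (fun x => M * g0 ((x - r') / γ)) (Ioi r') := by
    have := my_integrableOn_Ioi_shift (h := fun u => M * g0 (u / γ)) r' (hInt.const_mul M)
    exact this
  have hi2 : IntegrableOn (fun x => φ x * g0 (|r' - x| / γ)) (Ioi r') := by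
    apply Integrable.mono' hshift (hc.aestronglyMeasurable.restrict)
    refine (ae_restrict_iff' measurableSet_Ioi).2 (ae_of_all _ fun x hx => ?_)
    have hx' : r' < x := hx
    have habs : |r' - x| = x - r' := by rw [abs_sub_comm]; exact abs_of_pos (by linarith)
    have h0 : (0:ℝ) ≤ (x - r') / γ := div_nonneg (by linarith) hγ.le
    rw [Real.norm_eq_abs, abs_mul, habs, abs_of_pos (hg0_pos _ h0)]
    exact mul_le_mul_of_nonneg_right (hM x) (hg0_pos _ h0).le
  have hsplit : ∫ x in Ioi a, φ x * g0 (|r' - x| / γ)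
      = (∫ x in Ioc a r', φ x * g0 (|r' - x| / γ)) + ∫ x in Ioi r', φ x * g0 (|r' - x| / γ) := by
    rw [← setIntegral_union (Ioc_disjoint_Ioi le_rfl) measurableSet_Ioi hi1 hi2,
      Ioc_union_Ioi_eq_Ioi har.le]
  rw [hsplit]
  congr 1
  · -- first piece
    have e1 : ∫ x in Ioc a r', φ x * g0 (|r' - x| / γ)
        = ∫ x in Ioc a r', φ x * g0 ((r' - x) / γ) := by
      apply setIntegral_congr_fun measurableSet_Ioc
      intro x hx
      show φ x * g0 (|r' - x| / γ) = φ x * g0 ((r' - x) / γ)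
      rw [abs_of_nonneg (by linarith [hx.2] : (0:ℝ) ≤ r' - x)]
    rw [e1, ← intervalIntegral.integral_of_le har.le]
    have e2 : ∀ x : ℝ, φ x * g0 ((r' - x) / γ)
        = (fun u => φ (r' - u) * g0 (u / γ)) (r' - x) := by
      intro x; simp only []; rw [sub_sub_cancel]
    rw [intervalIntegral.integral_congr (fun x _ => e2 x)]
    rw [intervalIntegral.integral_comp_sub_left (fun u => φ (r' - u) * g0 (u / γ)) r']
    rw [sub_self]
    congr 1
    rw [ha]; ring
  · -- second piece
    have e1 : ∫ x in Ioi r', φ x * g0 (|r' - x| / γ)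
        = ∫ x in Ioi r', (fun u => φ (r' + u) * g0 (u / γ)) (x - r') := by
      apply setIntegral_congr_fun measurableSet_Ioi
      intro x hx
      have hx' : r' < x := hx
      show φ x * g0 (|r' - x| / γ) = φ (r' + (x - r')) * g0 ((x - r') / γ)
      rw [abs_sub_comm, abs_of_pos (by linarith), add_sub_cancel]
    rw [e1]
    exact my_integral_Ioi_shift (fun u => φ (r' + u) * g0 (u / γ)) r'

lemma my_g_contOn {g0 : ℝ → ℝ} (hg0_cont : ContinuousOn g0 (Ici 0)) {γ : ℝ} (hγ : 0 < γ) :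
    ContinuousOn (fun u => g0 (u / γ)) (Ici 0) := by
  apply hg0_cont.comp (continuous_id.div_const γ).continuousOn
  intro u hu
  exact div_nonneg hu (le_of_lt hγ)

lemma my_g_contAt {g0 : ℝ → ℝ} (hg0_cont : ContinuousOn g0 (Ici 0)) {γ : ℝ} (hγ : 0 < γ)
    {u : ℝ} (hu : 0 < u) : ContinuousAt (fun u => g0 (u / γ)) u := by
  have : ContinuousAt g0 (u / γ) :=
    hg0_cont.continuousAt (Ici_mem_nhds (by positivity))
  exact ContinuousAt.comp this ((continuous_id.div_const γ).continuousAt)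

lemma my_abs_cont {g0 : ℝ → ℝ} (hg0_cont : ContinuousOn g0 (Ici 0)) {γ : ℝ} (hγ : 0 < γ)
    (c : ℝ) : Continuous (fun x => g0 (|c - x| / γ)) := by
  apply hg0_cont.comp_continuous
  · exact (continuous_const.sub continuous_id).abs.div_const γ
  · intro x; exact div_nonneg (abs_nonneg _) hγ.le

lemma my_g_int {g0 : ℝ → ℝ} (hg0_cont : ContinuousOn g0 (Ici 0))
    (hg0_pos : ∀ z ∈ Ici (0 : ℝ), 0 < g0 z)
    (hg0_le_one : ∀ z ∈ Ici (0 : ℝ), g0 z ≤ 1)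
    (hg0_decay : g0 =O[atTop] fun z => 1 / z ^ 2)
    {γ : ℝ} (hγ : 0 < γ) :
    IntegrableOn (fun u => g0 (u / γ)) (Ioi (0:ℝ)) := by
  obtain ⟨C, hC⟩ := hg0_decay.bound
  rw [eventually_atTop] at hC
  obtain ⟨z0, hz0⟩ := hC
  set R : ℝ := max γ (γ * |z0| + γ) with hR
  have hRpos : 0 < R := lt_of_lt_of_le hγ (le_max_left _ _)
  have hmeas : AEStronglyMeasurable (fun u => g0 (u / γ)) (volume.restrict (Ioi (0:ℝ))) :=
    ((my_g_contOn hg0_cont hγ).mono Ioi_subset_Ici_self).aestronglyMeasurable measurableSet_Ioi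
  have h1 : IntegrableOn (fun u => g0 (u / γ)) (Ioc (0:ℝ) R) := by
    apply Integrable.mono' (integrableOn_const (C := (1:ℝ)) measure_Ioc_lt_top.ne)
    · exact ((my_g_contOn hg0_cont hγ).mono (Ioc_subset_Icc_self.trans Icc_subset_Ici_self)).aestronglyMeasurable
        measurableSet_Ioc
    · refine (ae_restrict_iff' measurableSet_Ioc).2 (ae_of_all _ fun u hu => ?_)
      have h0 : (0:ℝ) ≤ u / γ := div_nonneg hu.1.le hγ.le
      rw [Real.norm_eq_abs, abs_of_pos (hg0_pos _ h0)]
      exact hg0_le_one _ h0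
  have h2 : IntegrableOn (fun u => g0 (u / γ)) (Ioi R) := by
    have hint : IntegrableOn (fun u : ℝ => (C * γ ^ 2) * u ^ (-2:ℝ)) (Ioi R) :=
      (integrableOn_Ioi_rpow_of_lt (by norm_num) hRpos).const_mul _
    apply Integrable.mono' hint (hmeas.mono_set (Ioi_subset_Ioi hRpos.le))
    refine (ae_restrict_iff' measurableSet_Ioi).2 (ae_of_all _ fun u hu => ?_)
    have hu0 : 0 < u := lt_trans hRpos hu
    have huz : z0 ≤ u / γ := by
      have : γ * |z0| + γ ≤ u := le_of_lt (lt_of_le_of_lt (le_max_right _ _) hu)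
      have h2' : γ * z0 ≤ γ * |z0| := by
        have := le_abs_self z0; nlinarith
      rw [le_div_iff₀ hγ]; nlinarith
    have := hz0 (u / γ) huz
    rw [Real.norm_eq_abs, Real.norm_eq_abs] at this
    rw [Real.norm_eq_abs]
    calc |g0 (u / γ)| ≤ C * |1 / (u / γ) ^ 2| := this
      _ = C * γ ^ 2 * u ^ (-2:ℝ) := by
          rw [abs_of_pos (by positivity), Real.rpow_neg hu0.le]
          rw [show ((2:ℝ) = ((2:ℕ):ℝ)) by norm_num, Real.rpow_natCast]
          field_simp
  have := h1.union h2
  rwa [Ioc_union_Ioi_eq_Ioi hRpos.le] at this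
/-- With abstentions modeled by `g(z) = g0(z/γ)`, the right candidate's vote share
`S_R(ℓ,r) = ∫_{(ℓ+r)/2}^{∞} f(x) g(|r−x|) dx` is differentiable in r for ℓ < r, with
`∂S_R/∂r(ℓ,r) = (1/2) f((ℓ+r)/2) g((r−ℓ)/2) + ∫_{(ℓ+r)/2}^{∞} f′(x) g(|r−x|) dx`. -/
theorem stmt_7
    (f : ℝ → ℝ)
    (hf_smooth : ContDiff ℝ 1 f)
    (hf_bdd : ∃ M, ∀ x, |f x| ≤ M)
    (hf'_bdd : ∃ M, ∀ x, |deriv f x| ≤ M)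
    (hf_pos : ∀ x, 0 < f x)
    (hf_total : ∫ x, f x = 1)
    (hf_median : ∫ x in Iic (0 : ℝ), f x = 1 / 2)
    (g0 : ℝ → ℝ)
    (hg0_cont : ContinuousOn g0 (Ici 0))
    (hg0_pos : ∀ z ∈ Ici (0 : ℝ), 0 < g0 z)
    (hg0_le_one : ∀ z ∈ Ici (0 : ℝ), g0 z ≤ 1)
    (hg0_anti : AntitoneOn g0 (Ici 0))
    (hg0_zero : g0 0 = 1)
    (hg0_decay : g0 =O[atTop] fun z => 1 / z ^ 2)
    (hg0_int : ∫ z in Ioi (0 : ℝ), g0 z = 1)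
    (γ : ℝ) (hγ : 0 < γ)
    (ℓ r : ℝ) (hℓr : ℓ < r) :
    HasDerivAt (fun r' => ∫ x in Ioi ((ℓ + r') / 2), f x * g0 (|r' - x| / γ))
      ((1 / 2) * f ((ℓ + r) / 2) * g0 ((r - ℓ) / 2 / γ)
        + ∫ x in Ioi ((ℓ + r) / 2), deriv f x * g0 (|r - x| / γ)) r := by
  obtain ⟨M, hM⟩ := hf_bdd
  obtain ⟨M', hM'⟩ := hf'_bdd
  have hf_diff : Differentiable ℝ f := hf_smooth.differentiable one_ne_zero
  have hf'c : Continuous (deriv f) := hf_smooth.continuous_deriv le_rfl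
  have hfc : Continuous f := hf_smooth.continuous
  have hInt : IntegrableOn (fun u => g0 (u / γ)) (Ioi (0:ℝ)) :=
    my_g_int hg0_cont hg0_pos hg0_le_one hg0_decay hγ
  set b : ℝ := (r - ℓ) / 2 with hb_def
  have hb : 0 < b := by rw [hb_def]; linarith
  -- continuity of integrands on Ici 0
  have hgOn : ContinuousOn (fun u => g0 (u / γ)) (Ici 0) := my_g_contOn hg0_cont hγ
  have hcont : ∀ s : ℝ, ContinuousOn (fun u => f (s - u) * g0 (u / γ)) (Ici 0) := fun s =>
    (hfc.comp (continuous_const.sub continuous_id)).continuousOn.mul hgOn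
  have hcont' : ∀ s : ℝ, ContinuousOn (fun u => deriv f (s - u) * g0 (u / γ)) (Ici 0) := fun s =>
    (hf'c.comp (continuous_const.sub continuous_id)).continuousOn.mul hgOn
  have huIcc : ∀ c d : ℝ, 0 ≤ c → 0 ≤ d → uIcc c d ⊆ Ici (0:ℝ) := fun c d hc hd x hx =>
    le_trans (le_inf hc hd) hx.1
  have hII : ∀ s c d : ℝ, 0 ≤ c → 0 ≤ d →
      IntervalIntegrable (fun u => f (s - u) * g0 (u / γ)) volume c d := fun s c d hc hd =>
    ((hcont s).mono (huIcc c d hc hd)).intervalIntegrable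
  have hII' : ∀ s c d : ℝ, 0 ≤ c → 0 ≤ d →
      IntervalIntegrable (fun u => deriv f (s - u) * g0 (u / γ)) volume c d := fun s c d hc hd =>
    ((hcont' s).mono (huIcc c d hc hd)).intervalIntegrable
  have hIoc_sub : uIoc (0:ℝ) b ⊆ Ici (0:ℝ) := by
    rw [uIoc_of_le hb.le]
    exact Ioc_subset_Icc_self.trans Icc_subset_Ici_self
  -- derivative of the inner part: u ↦ f (x - u) has derivative deriv f (x - u)
  have hd_inner : ∀ t x : ℝ, HasDerivAt (fun x => f (x - t)) (deriv f (x - t)) x := by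
    intro t x
    have := ((hf_diff (x - t)).hasDerivAt).comp x ((hasDerivAt_id x).sub_const t)
    simpa [Function.comp_def] using this
  have hd_inner' : ∀ t x : ℝ, HasDerivAt (fun x => f (x + t)) (deriv f (x + t)) x := by
    intro t x
    have := ((hf_diff (x + t)).hasDerivAt).comp x ((hasDerivAt_id x).add_const t)
    simpa [Function.comp_def] using this
  -- P : derivative of fixed-endpoint interval integral
  have hP : HasDerivAt (fun s => ∫ u in (0:ℝ)..b, f (s - u) * g0 (u / γ))
      (∫ u in (0:ℝ)..b, deriv f (r - u) * g0 (u / γ)) r := by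
    refine (intervalIntegral.hasDerivAt_integral_of_dominated_loc_of_deriv_le
      (F := fun s u => f (s - u) * g0 (u / γ)) (F' := fun s u => deriv f (s - u) * g0 (u / γ))
      (bound := fun u => |M'| * |g0 (u / γ)|) (Metric.ball_mem_nhds r one_pos) ?_ (hII r 0 b le_rfl hb.le) ?_ ?_ ?_ ?_).2
    · exact Eventually.of_forall fun x =>
        ((hcont x).mono hIoc_sub).aestronglyMeasurable measurableSet_uIoc
    · exact ((hcont' r).mono hIoc_sub).aestronglyMeasurable measurableSet_uIoc
    · refine ae_of_all _ fun t ht x hx => ?_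
      rw [norm_mul, Real.norm_eq_abs, Real.norm_eq_abs]
      exact mul_le_mul_of_nonneg_right ((hM' _).trans (le_abs_self M')) (abs_nonneg _)
    · exact ((continuousOn_const.mul hgOn.abs).mono (huIcc 0 b le_rfl hb.le)).intervalIntegrable
    · exact ae_of_all _ fun t ht x hx => (hd_inner t x).mul_const _
  -- G2 : derivative of the integral over Ioi 0
  have hmeasG : ∀ x : ℝ, AEStronglyMeasurable (fun u => f (x + u) * g0 (u / γ))
      (volume.restrict (Ioi (0:ℝ))) := fun x =>
    (((hfc.comp (continuous_const.add continuous_id)).continuousOn.mul hgOn).mono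
      Ioi_subset_Ici_self).aestronglyMeasurable measurableSet_Ioi
  have hG2 : HasDerivAt (fun s => ∫ u in Ioi (0:ℝ), f (s + u) * g0 (u / γ))
      (∫ u in Ioi (0:ℝ), deriv f (r + u) * g0 (u / γ)) r := by
    refine (hasDerivAt_integral_of_dominated_loc_of_deriv_le
      (F := fun s u => f (s + u) * g0 (u / γ)) (F' := fun s u => deriv f (s + u) * g0 (u / γ))
      (bound := fun u => |M'| * |g0 (u / γ)|) (Metric.ball_mem_nhds r one_pos)
      (Eventually.of_forall hmeasG) ?_ ?_ ?_ ((hInt.abs).const_mul _) ?_).2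
    · refine Integrable.mono' ((hInt.abs).const_mul |M|) (hmeasG r) ?_
      refine (ae_restrict_iff' measurableSet_Ioi).2 (ae_of_all _ fun u hu => ?_)
      rw [Real.norm_eq_abs, abs_mul]
      exact mul_le_mul ((hM _).trans (le_abs_self M)) le_rfl (abs_nonneg _) (abs_nonneg _)
    · exact (((hf'c.comp (continuous_const.add continuous_id)).continuousOn.mul hgOn).mono
        Ioi_subset_Ici_self).aestronglyMeasurable measurableSet_Ioi
    · refine ae_of_all _ fun u x hx => ?_
      rw [norm_mul, Real.norm_eq_abs, Real.norm_eq_abs]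
      exact mul_le_mul_of_nonneg_right ((hM' _).trans (le_abs_self M')) (abs_nonneg _)
    · exact ae_of_all _ fun u x hx => (hd_inner' u x).mul_const _
  -- Q̃ : FTC part
  have hψ : HasDerivAt (fun y => ∫ u in b..y, f (r - u) * g0 (u / γ))
      (f (r - b) * g0 (b / γ)) b := by
    refine intervalIntegral.integral_hasDerivAt_right (hII r b b hb.le hb.le) ?_ ?_
    · exact AEStronglyMeasurable.stronglyMeasurableAtFilter_of_mem
        (((hcont r).mono Ioi_subset_Ici_self).aestronglyMeasurable measurableSet_Ioi)
        (Ioi_mem_nhds hb)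
    · exact ContinuousAt.mul
        ((hfc.comp (continuous_const.sub continuous_id)).continuousAt)
        (my_g_contAt hg0_cont hγ hb)
  have hy : HasDerivAt (fun r' : ℝ => (r' - ℓ) / 2) (1/2 : ℝ) r := by
    have := ((hasDerivAt_id r).sub_const ℓ).div_const 2
    simpa using this
  have hQt : HasDerivAt (fun r' => ∫ u in b..((r' - ℓ) / 2), f (r - u) * g0 (u / γ))
      (f (r - b) * g0 (b / γ) * (1/2)) r := by
    have hyr : (fun r' : ℝ => (r' - ℓ) / 2) r = b := by simp [hb_def]
    have := HasDerivAt.comp r (hyr ▸ hψ) hy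
    exact this
  -- D : the error term has derivative 0
  have lip : ∀ p q : ℝ, |f p - f q| ≤ |M'| * |p - q| := by
    intro p q
    have := (convex_univ).norm_image_sub_le_of_norm_deriv_le
      (fun x _ => hf_diff x)
      (fun x _ => by rw [Real.norm_eq_abs]; exact (hM' x).trans (le_abs_self M'))
      (mem_univ q) (mem_univ p)
    simpa [Real.norm_eq_abs] using this
  have hD : HasDerivAt
      (fun r' => ∫ u in b..((r' - ℓ) / 2), (f (r' - u) - f (r - u)) * g0 (u / γ)) 0 r := by
    rw [hasDerivAt_iff_isLittleO]
    simp only [smul_zero, sub_zero]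
    have hDr : (∫ u in b..((r - ℓ) / 2), (f (r - u) - f (r - u)) * g0 (u / γ)) = 0 := by
      rw [← hb_def, intervalIntegral.integral_same]
    rw [hDr, ]
    rw [isLittleO_iff]
    intro c hc
    have hδ : 0 < min b (2 * c / (|M'| + 1)) := by positivity
    filter_upwards [Metric.ball_mem_nhds r hδ] with x hx
    rw [Metric.mem_ball, Real.dist_eq] at hx
    have hxb : |x - r| < b := lt_of_lt_of_le hx (min_le_left _ _)
    have hxc : |x - r| < 2 * c / (|M'| + 1) := lt_of_lt_of_le hx (min_le_right _ _)
    have hxℓ : 0 < (x - ℓ) / 2 := by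
      have := abs_lt.1 hxb
      rw [hb_def] at this
      linarith [this.1]
    have key : ∀ u ∈ uIoc b ((x - ℓ) / 2),
        ‖(f (x - u) - f (r - u)) * g0 (u / γ)‖ ≤ |M'| * |x - r| := by
      intro u hu
      have hu0 : 0 < u := lt_of_le_of_lt (le_min hb.le hxℓ.le) hu.1
      have hgnn : (0:ℝ) ≤ u / γ := by positivity
      rw [norm_mul, Real.norm_eq_abs, Real.norm_eq_abs]
      have h1 : |f (x - u) - f (r - u)| ≤ |M'| * |x - r| := by
        have := lip (x - u) (r - u)
        have he : x - u - (r - u) = x - r := by ring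
        rwa [he] at this
      have h2 : |g0 (u / γ)| ≤ 1 := by
        rw [abs_of_pos (hg0_pos _ hgnn)]; exact hg0_le_one _ hgnn
      calc |f (x - u) - f (r - u)| * |g0 (u / γ)|
          ≤ (|M'| * |x - r|) * 1 :=
            mul_le_mul h1 h2 (abs_nonneg _) (by positivity)
        _ = |M'| * |x - r| := by ring
    have hnorm := intervalIntegral.norm_integral_le_of_norm_le_const key
    rw [sub_zero]
    rw [Real.norm_eq_abs] at hnorm
    have he2 : (x - ℓ) / 2 - b = (x - r) / 2 := by rw [hb_def]; ring
    rw [he2] at hnorm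
    have habs2 : |(x - r) / 2| = |x - r| / 2 := by rw [abs_div]; norm_num
    rw [habs2] at hnorm
    refine hnorm.trans ?_
    rw [Real.norm_eq_abs]
    have hxr : 0 ≤ |x - r| := abs_nonneg _
    have hM'0 : 0 ≤ |M'| := abs_nonneg _
    have h3 : |x - r| * (|M'| + 1) < 2 * c := (lt_div_iff₀ (by positivity)).1 hxc
    nlinarith [mul_le_mul_of_nonneg_left h3.le hxr]
  -- eventual equality with the decomposition
  have hev : (fun r' => ∫ x in Ioi ((ℓ + r') / 2), f x * g0 (|r' - x| / γ))
      =ᶠ[𝓝 r] fun r' =>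
        (∫ u in (0:ℝ)..b, f (r' - u) * g0 (u / γ))
        + ((∫ u in b..((r' - ℓ) / 2), f (r - u) * g0 (u / γ))
           + ∫ u in b..((r' - ℓ) / 2), (f (r' - u) - f (r - u)) * g0 (u / γ))
        + ∫ u in Ioi (0:ℝ), f (r' + u) * g0 (u / γ) := by
    filter_upwards [Metric.ball_mem_nhds r hb] with x hx
    rw [Metric.mem_ball, Real.dist_eq] at hx
    have hxb := abs_lt.1 hx
    have hxℓ : ℓ < x := by
      have : -b < x - r := hxb.1
      rw [hb_def] at this; linarith
    have hx2 : (0:ℝ) ≤ (x - ℓ) / 2 := by linarith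
    rw [my_split hg0_cont hg0_pos hγ hInt hfc hM hxℓ]
    have hadd : (∫ u in (0:ℝ)..b, f (x - u) * g0 (u / γ))
        + (∫ u in b..((x - ℓ)/2), f (x - u) * g0 (u / γ))
        = ∫ u in (0:ℝ)..((x - ℓ)/2), f (x - u) * g0 (u / γ) :=
      intervalIntegral.integral_add_adjacent_intervals (hII x 0 b le_rfl hb.le)
        (hII x b _ hb.le hx2)
    have hdint : IntervalIntegrable
        (fun u => (f (x - u) - f (r - u)) * g0 (u / γ)) volume b ((x - ℓ)/2) := by
      have he : (fun u => (f (x - u) - f (r - u)) * g0 (u / γ))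
          = fun u => f (x - u) * g0 (u / γ) - f (r - u) * g0 (u / γ) := by
        funext u; ring
      rw [he]
      exact (hII x b _ hb.le hx2).sub (hII r b _ hb.le hx2)
    have hqd : ∫ u in b..((x - ℓ)/2), f (x - u) * g0 (u / γ)
        = (∫ u in b..((x - ℓ)/2), f (r - u) * g0 (u / γ))
          + ∫ u in b..((x - ℓ)/2), (f (x - u) - f (r - u)) * g0 (u / γ) := by
      rw [← intervalIntegral.integral_add (hII r b _ hb.le hx2) hdint]
      exact intervalIntegral.integral_congr fun u _ => by ring
    rw [← hadd, hqd]
  -- combine everything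
  have hsum := (hP.add (hQt.add hD)).add hG2
  rw [add_zero] at hsum
  refine (Filter.EventuallyEq.hasDerivAt_iff hev).2 ?_
  convert hsum using 1
  · rfl
  rw [my_split hg0_cont hg0_pos hγ hInt hf'c hM' hℓr]
  have hrb : r - b = (ℓ + r) / 2 := by rw [hb_def]; ring
  rw [← hrb, ← hb_def]
  ring
end

section
/- For all real ℓ < r, ∂S_R/∂r(ℓ,r) = (1/2) f((ℓ+r)/2) g_0((r−ℓ)/(2γ)) + γ ∫_{−(r−ℓ)/(2γ)}^{∞} f′(r + γu) g_0(|u|) du. -/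
open MeasureTheory Set Filter Topology Asymptotics

lemma my_shiftIoi (g : ℝ → ℝ) (a b : ℝ) :
    ∫ x in Ioi a, g (x + b) = ∫ x in Ioi (a + b), g x := by
  rw [← integral_indicator measurableSet_Ioi, ← integral_indicator measurableSet_Ioi,
    ← integral_add_right_eq_self (fun x => Set.indicator (Ioi (a + b)) g x) b]
  congr 1
  ext x
  by_cases h : a < x
  · simp [indicator_apply, mem_Ioi, h, add_lt_add_iff_right]
  · simp [indicator_apply, mem_Ioi, h, add_lt_add_iff_right]

lemma my_split_s8 (φ : ℝ → ℝ) (s c : ℝ) (h : IntegrableOn φ (Ioi (min s c))) :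
    ∫ u in Ioi s, φ u = (∫ u in s..c, φ u) + ∫ u in Ioi c, φ u := by
  rcases le_total s c with hsc | hsc
  · have hmin : min s c = s := min_eq_left hsc
    rw [hmin] at h
    have h1 : Ioc s c ∪ Ioi c = Ioi s := Ioc_union_Ioi_eq_Ioi hsc
    have h2 : (∫ u in Ioc s c ∪ Ioi c, φ u) = (∫ u in Ioc s c, φ u) + ∫ u in Ioi c, φ u :=
      setIntegral_union (Ioc_disjoint_Ioi le_rfl) measurableSet_Ioi
        (h.mono_set (by rw [← h1]; exact subset_union_left))
        (h.mono_set (by rw [← h1]; exact subset_union_right))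
    rw [intervalIntegral.integral_of_le hsc, ← h2, h1]
  · have hmin : min s c = c := min_eq_right hsc
    rw [hmin] at h
    have h1 : Ioc c s ∪ Ioi s = Ioi c := Ioc_union_Ioi_eq_Ioi hsc
    have h2 : (∫ u in Ioc c s ∪ Ioi s, φ u) = (∫ u in Ioc c s, φ u) + ∫ u in Ioi s, φ u :=
      setIntegral_union (Ioc_disjoint_Ioi le_rfl) measurableSet_Ioi
        (h.mono_set (by rw [← h1]; exact subset_union_left))
        (h.mono_set (by rw [← h1]; exact subset_union_right))
    rw [h1] at h2
    rw [intervalIntegral.integral_symm, intervalIntegral.integral_of_le hsc]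
    linarith

/-- For ℓ < r, after the substitution u = (x−r)/γ,
`∂S_R/∂r(ℓ,r) = (1/2) f((ℓ+r)/2) g0((r−ℓ)/(2γ)) + γ ∫_{−(r−ℓ)/(2γ)}^{∞} f′(r+γu) g0(|u|) du`. -/
theorem stmt_8
    (f : ℝ → ℝ)
    (hf_smooth : ContDiff ℝ 1 f)
    (hf_bdd : ∃ M, ∀ x, |f x| ≤ M)
    (hf'_bdd : ∃ M, ∀ x, |deriv f x| ≤ M)
    (hf_pos : ∀ x, 0 < f x)
    (hf_total : ∫ x, f x = 1)
    (hf_median : ∫ x in Iic (0 : ℝ), f x = 1 / 2)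
    (g0 : ℝ → ℝ)
    (hg0_cont : ContinuousOn g0 (Ici 0))
    (hg0_pos : ∀ z ∈ Ici (0 : ℝ), 0 < g0 z)
    (hg0_le_one : ∀ z ∈ Ici (0 : ℝ), g0 z ≤ 1)
    (hg0_anti : AntitoneOn g0 (Ici 0))
    (hg0_zero : g0 0 = 1)
    (hg0_decay : g0 =O[atTop] fun z => 1 / z ^ 2)
    (hg0_int : ∫ z in Ioi (0 : ℝ), g0 z = 1)
    (γ : ℝ) (hγ : 0 < γ)
    (ℓ r : ℝ) (hℓr : ℓ < r) :
    HasDerivAt (fun r' => ∫ x in Ioi ((ℓ + r') / 2), f x * g0 (|r' - x| / γ))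
      ((1 / 2) * f ((ℓ + r) / 2) * g0 ((r - ℓ) / (2 * γ))
        + γ * ∫ u in Ioi (-((r - ℓ) / (2 * γ))), deriv f (r + γ * u) * g0 |u|) r := by
  obtain ⟨M, hM⟩ := hf'_bdd
  obtain ⟨Mf, hMf⟩ := hf_bdd
  have hγ' : (γ : ℝ) ≠ 0 := ne_of_gt hγ
  have hf_diff : Differentiable ℝ f := hf_smooth.differentiable one_ne_zero
  have hfc : Continuous f := hf_diff.continuous
  have hf'c : Continuous (deriv f) := hf_smooth.continuous_deriv le_rfl
  -- continuity of u ↦ g0 |u|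
  have hg : Continuous fun u : ℝ => g0 |u| := by
    rw [← continuousOn_univ]
    exact hg0_cont.comp continuous_abs.continuousOn (fun x _ => abs_nonneg x)
  have hg_nonneg : ∀ u : ℝ, 0 ≤ g0 |u| := fun u => (hg0_pos _ (abs_nonneg u)).le
  have hg_le_one : ∀ u : ℝ, g0 |u| ≤ 1 := fun u => hg0_le_one _ (abs_nonneg u)
  -- integrability of g0 ∘ abs on any Ioi
  have hg0_integrable : IntegrableOn g0 (Ioi (0:ℝ)) := by
    by_contra h
    rw [MeasureTheory.integral_undef h] at hg0_int
    norm_num at hg0_int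
  have habs_int : ∀ b : ℝ, IntegrableOn (fun u => g0 |u|) (Ioi b) := by
    intro b
    have h1 : IntegrableOn (fun u => g0 |u|) (Icc b 0) := hg.integrableOn_Icc
    have h2 : IntegrableOn (fun u => g0 |u|) (Ioi (0:ℝ)) :=
      hg0_integrable.congr_fun (fun x hx => by rw [abs_of_pos hx]) measurableSet_Ioi
    exact (h1.union h2).mono_set (fun x hx => by
      rcases le_or_gt x 0 with h | h
      · exact Or.inl ⟨le_of_lt hx, h⟩
      · exact Or.inr h)
  have hcont : ∀ t : ℝ, Continuous fun u : ℝ => f (t + γ * u) * g0 |u| := fun t =>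
    (hfc.comp (continuous_const.add (continuous_const.mul continuous_id))).mul hg
  have hcont' : ∀ t : ℝ, Continuous fun u : ℝ => deriv f (t + γ * u) * g0 |u| := fun t =>
    (hf'c.comp (continuous_const.add (continuous_const.mul continuous_id))).mul hg
  have hint : ∀ (t b : ℝ), IntegrableOn (fun u => f (t + γ * u) * g0 |u|) (Ioi b) := by
    intro t b
    refine Integrable.mono' ((habs_int b).const_mul Mf) ((hcont t).aestronglyMeasurable.restrict) ?_
    filter_upwards with u
    rw [Real.norm_eq_abs, abs_mul, abs_of_nonneg (hg_nonneg u)]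
    exact mul_le_mul_of_nonneg_right (hMf _) (hg_nonneg u)
  have hint' : ∀ (t b : ℝ), IntegrableOn (fun u => deriv f (t + γ * u) * g0 |u|) (Ioi b) := by
    intro t b
    refine Integrable.mono' ((habs_int b).const_mul M) ((hcont' t).aestronglyMeasurable.restrict) ?_
    filter_upwards with u
    rw [Real.norm_eq_abs, abs_mul, abs_of_nonneg (hg_nonneg u)]
    exact mul_le_mul_of_nonneg_right (hM _) (hg_nonneg u)
  set c : ℝ := -((r - ℓ) / (2 * γ)) with hc
  have hc_neg : c < 0 := by
    rw [hc]
    have : 0 < (r - ℓ) / (2 * γ) := div_pos (by linarith) (by linarith)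
    linarith
  set a : ℝ → ℝ := fun t => -((t - ℓ) / (2 * γ)) with ha_def
  set K : ℝ → ℝ := fun t => ∫ u in (a t)..c, f (t + γ * u) * g0 |u| with hK_def
  set P : ℝ → ℝ := fun t => ∫ u in Ioi c, f (t + γ * u) * g0 |u| with hP_def
  -- change of variables: F = γ * (K + P)
  have hchange : ∀ t : ℝ, (∫ x in Ioi ((ℓ + t) / 2), f x * g0 (|t - x| / γ))
      = γ * (K t + P t) := by
    intro t
    have e0 : (ℓ - t) / 2 + t = (ℓ + t) / 2 := by ring
    have e1 : (∫ x in Ioi ((ℓ + t) / 2), f x * g0 (|t - x| / γ))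
        = ∫ y in Ioi ((ℓ - t) / 2), f (y + t) * g0 (|t - (y + t)| / γ) := by
      rw [my_shiftIoi (fun x => f x * g0 (|t - x| / γ)) ((ℓ - t) / 2) t, e0]
    have e2 : (∫ y in Ioi ((ℓ - t) / 2), f (y + t) * g0 (|t - (y + t)| / γ))
        = ∫ y in Ioi ((ℓ - t) / 2), f (y + t) * g0 (|y| / γ) := by
      refine setIntegral_congr_fun measurableSet_Ioi (fun y _ => ?_)
      have : t - (y + t) = -y := by ring
      rw [this, abs_neg]
    have e3 : (∫ u in Ioi (a t), f (t + γ * u) * g0 |u|)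
        = γ⁻¹ • ∫ y in Ioi (γ * a t), f (y + t) * g0 (|y| / γ) := by
      rw [← integral_comp_mul_left_Ioi (fun y => f (y + t) * g0 (|y| / γ)) (a t) hγ]
      refine setIntegral_congr_fun measurableSet_Ioi (fun u _ => ?_)
      have h1 : γ * u + t = t + γ * u := by ring
      have h2 : |γ * u| / γ = |u| := by
        rw [abs_mul, abs_of_pos hγ]
        field_simp
      rw [h1, h2]
    have e4 : γ * a t = (ℓ - t) / 2 := by
      rw [ha_def]
      field_simp
      ring
    have e5 : (∫ u in Ioi (a t), f (t + γ * u) * g0 |u|) = K t + P t :=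
      my_split_s8 _ _ _ (hint t _)
    have e3' : (∫ y in Ioi (γ * a t), f (y + t) * g0 (|y| / γ))
        = γ * ∫ u in Ioi (a t), f (t + γ * u) * g0 |u| := by
      rw [e3, smul_eq_mul, ← mul_assoc, mul_inv_cancel₀ hγ', one_mul]
    rw [e1, e2, ← e4, e3', e5]
  -- derivative of P via dominated convergence
  have hP : HasDerivAt P (∫ u in Ioi c, deriv f (r + γ * u) * g0 |u|) r := by
    have := (hasDerivAt_integral_of_dominated_loc_of_deriv_le (μ := volume.restrict (Ioi c))
      (F := fun t u => f (t + γ * u) * g0 |u|)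
      (F' := fun t u => deriv f (t + γ * u) * g0 |u|)
      (x₀ := r) (bound := fun u => M * g0 |u|) (Metric.ball_mem_nhds r one_pos)
      (Filter.Eventually.of_forall fun t => ((hcont t).aestronglyMeasurable.restrict))
      (hint r c) ((hcont' r).aestronglyMeasurable.restrict)
      ?_ ((habs_int c).const_mul M) ?_).2
    · exact this
    · filter_upwards with u
      intro t _
      rw [Real.norm_eq_abs, abs_mul, abs_of_nonneg (hg_nonneg u)]
      exact mul_le_mul_of_nonneg_right (hM _) (hg_nonneg u)
    · filter_upwards with u
      intro t _
      have h1 : HasDerivAt (fun t : ℝ => t + γ * u) 1 t := (hasDerivAt_id t).add_const (γ * u)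
      have h2 : HasDerivAt (fun t : ℝ => f (t + γ * u)) (deriv f (t + γ * u)) t := by
        simpa [Function.comp_def] using (hf_diff (t + γ * u)).hasDerivAt.comp t h1
      exact h2.mul_const (g0 |u|)
  -- derivative of K
  have har : a r = c := rfl
  have hΨ : HasDerivAt (fun s => ∫ u in s..c, f (r + γ * u) * g0 |u|)
      (-(f (r + γ * c) * g0 |c|)) c :=
    intervalIntegral.integral_hasDerivAt_left ((hcont r).intervalIntegrable _ _)
      ⟨univ, univ_mem, (hcont r).aestronglyMeasurable.restrict⟩ (hcont r).continuousAt
  have ha' : HasDerivAt a (-(1 / (2 * γ))) r := by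
    have : HasDerivAt (fun t : ℝ => (t - ℓ) / (2 * γ)) (1 / (2 * γ)) r := by
      simpa using (((hasDerivAt_id r).sub_const ℓ).div_const (2 * γ))
    exact this.neg
  have hΨa : HasDerivAt (fun t => ∫ u in (a t)..c, f (r + γ * u) * g0 |u|)
      (-(f (r + γ * c) * g0 |c|) * -(1 / (2 * γ))) r := by
    have h := hΨ.comp r ha'
    exact h
  -- the error term E
  set E : ℝ → ℝ := fun t => K t - ∫ u in (a t)..c, f (r + γ * u) * g0 |u| with hE_def
  have hEeq : ∀ t, E t = ∫ u in (a t)..c,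
      (f (t + γ * u) * g0 |u| - f (r + γ * u) * g0 |u|) := by
    intro t
    rw [hE_def]
    simp only [hK_def]
    rw [intervalIntegral.integral_sub ((hcont t).intervalIntegrable _ _)
      ((hcont r).intervalIntegrable _ _)]
  have hEr : E r = 0 := by
    rw [hE_def]
    simp [hK_def, har]
  have hM0 : 0 ≤ M := le_trans (abs_nonneg _) (hM 0)
  have hlip : ∀ x y : ℝ, |f y - f x| ≤ M * |y - x| := by
    intro x y
    have := convex_univ.norm_image_sub_le_of_norm_deriv_le (f := f)
      (fun z _ => hf_diff z) (fun z _ => by rw [Real.norm_eq_abs]; exact hM z)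
      (mem_univ x) (mem_univ y)
    simpa [Real.norm_eq_abs] using this
  have hEbound : ∀ t : ℝ, |E t| ≤ (M / (2 * γ)) * |t - r| ^ 2 := by
    intro t
    rw [hEeq t]
    have hb : ∀ u ∈ Set.uIoc (a t) c,
        ‖f (t + γ * u) * g0 |u| - f (r + γ * u) * g0 |u|‖ ≤ M * |t - r| := by
      intro u _
      rw [Real.norm_eq_abs, ← sub_mul, abs_mul]
      have h1 : |f (t + γ * u) - f (r + γ * u)| ≤ M * |t - r| := by
        have := hlip (r + γ * u) (t + γ * u)
        simpa [add_sub_add_right_eq_sub] using this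
      calc |f (t + γ * u) - f (r + γ * u)| * |g0 (|u|)|
          ≤ (M * |t - r|) * 1 := by
            apply mul_le_mul h1 _ (abs_nonneg _) (mul_nonneg hM0 (abs_nonneg _))
            rw [abs_of_nonneg (hg_nonneg u)]
            exact hg_le_one u
        _ = M * |t - r| := mul_one _
    have := intervalIntegral.norm_integral_le_of_norm_le_const hb
    rw [Real.norm_eq_abs] at this
    have hca : |c - a t| = |t - r| / (2 * γ) := by
      have : c - a t = (t - r) / (2 * γ) := by rw [hc, ha_def]; ring
      rw [this, abs_div, abs_of_pos (by linarith : (0:ℝ) < 2 * γ)]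
    rw [hca] at this
    calc |∫ u in (a t)..c, (f (t + γ * u) * g0 |u| - f (r + γ * u) * g0 |u|)|
        ≤ M * |t - r| * (|t - r| / (2 * γ)) := this
      _ = (M / (2 * γ)) * |t - r| ^ 2 := by ring
  have hE0 : HasDerivAt E 0 r := by
    rw [hasDerivAt_iff_isLittleO]
    have h1 : (fun t => E t) =O[𝓝 r] fun t => (t - r) ^ 2 := by
      rw [Asymptotics.isBigO_iff]
      refine ⟨M / (2 * γ), Filter.Eventually.of_forall fun t => ?_⟩
      rw [Real.norm_eq_abs, Real.norm_eq_abs, abs_pow]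
      exact hEbound t
    have h2 : (fun t : ℝ => (t - r) ^ 2) =o[𝓝 r] fun t => t - r := by
      rw [Asymptotics.isLittleO_iff_tendsto (fun t ht => by rw [ht]; ring)]
      have heq : (fun t : ℝ => (t - r) ^ 2 / (t - r)) = fun t => t - r := by
        funext t
        rcases eq_or_ne (t - r) 0 with h | h
        · rw [h]; simp
        · rw [sq, mul_div_assoc, div_self h, mul_one]
      rw [heq]
      have : Tendsto (fun t : ℝ => t - r) (𝓝 r) (𝓝 (r - r)) :=
        (continuous_id.sub continuous_const).tendsto r
      simpa using this
    simpa [hEr] using h1.trans_isLittleO h2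
  have hK : HasDerivAt K (-(f (r + γ * c) * g0 |c|) * -(1 / (2 * γ))) r := by
    have : HasDerivAt (fun t => (∫ u in (a t)..c, f (r + γ * u) * g0 |u|) + E t)
        (-(f (r + γ * c) * g0 |c|) * -(1 / (2 * γ)) + 0) r := hΨa.add hE0
    have heq : K = fun t => (∫ u in (a t)..c, f (r + γ * u) * g0 |u|) + E t := by
      funext t; rw [hE_def]; ring
    rw [heq]
    simpa using this
  -- assemble
  have hFG : (fun r' => ∫ x in Ioi ((ℓ + r') / 2), f x * g0 (|r' - x| / γ))
      = fun t => γ * (K t + P t) := funext hchange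
  rw [hFG]
  have hGd : HasDerivAt (fun t => γ * (K t + P t))
      (γ * ((-(f (r + γ * c) * g0 |c|) * -(1 / (2 * γ)))
        + ∫ u in Ioi c, deriv f (r + γ * u) * g0 |u|)) r := (hK.add hP).const_mul γ
  have hval1 : r + γ * c = (ℓ + r) / 2 := by rw [hc]; field_simp; ring
  have hval2 : |c| = (r - ℓ) / (2 * γ) := by
    rw [abs_of_neg hc_neg, hc, neg_neg]
  convert hGd using 1
  rw [hval1, hval2]
  field_simp
end

section
/- Define D(γ, r) = −f(r)/2 + γ ∫_0^∞ f′(r − γu) g_0(u) du, which is the limiting value of ∂S_L/∂ℓ(ℓ, r) as ℓ → r when the loyalty parameter is γ. For every real r there exists γ_0 > 0 such that for all 0 < γ < γ_0, D(γ, r) < 0. In other words, when voter loyalty is sufficiently low, it is not in the left candidate's interest to move arbitrarily close to the right candidate's position r. -/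
open MeasureTheory Set Filter Topology Asymptotics

/-- Let `D(γ,r) = −f(r)/2 + γ ∫_0^∞ f′(r − γu) g0(u) du` (the limiting value of
`∂S_L/∂ℓ(ℓ,r)` as ℓ → r with loyalty parameter γ).  For every r there is γ₀ > 0 such that
`D(γ,r) < 0` for all 0 < γ < γ₀: when voter loyalty is sufficiently low, it is not in the left
candidate's interest to move arbitrarily close to r. -/
theorem stmt_10
    (f : ℝ → ℝ)
    (hf_smooth : ContDiff ℝ 1 f)
    (hf_bdd : ∃ M, ∀ x, |f x| ≤ M)
    (hf'_bdd : ∃ M, ∀ x, |deriv f x| ≤ M)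
    (hf_pos : ∀ x, 0 < f x)
    (hf_total : ∫ x, f x = 1)
    (hf_median : ∫ x in Iic (0 : ℝ), f x = 1 / 2)
    (g0 : ℝ → ℝ)
    (hg0_cont : ContinuousOn g0 (Ici 0))
    (hg0_pos : ∀ z ∈ Ici (0 : ℝ), 0 < g0 z)
    (hg0_le_one : ∀ z ∈ Ici (0 : ℝ), g0 z ≤ 1)
    (hg0_anti : AntitoneOn g0 (Ici 0))
    (hg0_zero : g0 0 = 1)
    (hg0_decay : g0 =O[atTop] fun z => 1 / z ^ 2)
    (hg0_int : ∫ z in Ioi (0 : ℝ), g0 z = 1)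
    (r : ℝ) :
    ∃ γ₀ > 0, ∀ γ : ℝ, 0 < γ → γ < γ₀ →
      -f r / 2 + γ * ∫ u in Ioi (0 : ℝ), deriv f (r - γ * u) * g0 u < 0 := by
  obtain ⟨M, hM⟩ := hf'_bdd
  have hM0 : 0 ≤ M := le_trans (abs_nonneg _) (hM 0)
  have hg0_integrable : IntegrableOn g0 (Ioi 0) := by
    by_contra h
    rw [MeasureTheory.integral_undef h] at hg0_int
    norm_num at hg0_int
  have hfr : 0 < f r := hf_pos r
  refine ⟨f r / (2 * (M + 1)), by positivity, ?_⟩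
  intro γ hγ hγ'
  have hderiv_cont : Continuous (deriv f) := hf_smooth.continuous_deriv le_rfl
  have hmeas : AEStronglyMeasurable (fun u => deriv f (r - γ * u) * g0 u)
      (volume.restrict (Ioi 0)) := by
    apply AEStronglyMeasurable.mul
    · exact (hderiv_cont.comp
        (continuous_const.sub (continuous_const.mul continuous_id))).aestronglyMeasurable
    · exact (hg0_cont.mono Ioi_subset_Ici_self).aestronglyMeasurable measurableSet_Ioi
  have hbnd : ∀ᵐ u ∂(volume.restrict (Ioi (0:ℝ))),
      ‖deriv f (r - γ * u) * g0 u‖ ≤ M * g0 u := by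
    filter_upwards [ae_restrict_mem measurableSet_Ioi] with u hu
    have hg : 0 ≤ g0 u := (hg0_pos u (Ioi_subset_Ici_self hu)).le
    rw [norm_mul, Real.norm_of_nonneg hg]
    gcongr
    exact hM _
  have hMg_int : Integrable (fun u => M * g0 u) (volume.restrict (Ioi 0)) :=
    hg0_integrable.const_mul M
  have hbound : ‖∫ u in Ioi (0:ℝ), deriv f (r - γ * u) * g0 u‖ ≤ M := by
    calc ‖∫ u in Ioi (0:ℝ), deriv f (r - γ * u) * g0 u‖
        ≤ ∫ u in Ioi (0:ℝ), M * g0 u :=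
          MeasureTheory.norm_integral_le_of_norm_le hMg_int hbnd
      _ = M * ∫ u in Ioi (0:ℝ), g0 u := by rw [MeasureTheory.integral_const_mul]
      _ = M := by rw [hg0_int, mul_one]
  rw [Real.norm_eq_abs, abs_le] at hbound
  have h1 : γ * ∫ u in Ioi (0:ℝ), deriv f (r - γ * u) * g0 u ≤ γ * M :=
    mul_le_mul_of_nonneg_left hbound.2 hγ.le
  have h2 : γ * (M + 1) < f r / 2 := by
    have h := (lt_div_iff₀ (by positivity : (0:ℝ) < 2 * (M + 1))).mp hγ'
    nlinarith
  nlinarith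
end

section
/- Fix real numbers ℓ < r, and regard S_L(ℓ,r) as a function of the loyalty parameter γ > 0 through g(z) = g_0(z/γ). Then S_L(ℓ,r) ∼ 2γ f(ℓ) as γ → 0+, i.e., lim_{γ→0+} S_L(ℓ,r)/γ = 2 f(ℓ). -/
open MeasureTheory Set Filter Topology Asymptotics

/-- For fixed ℓ < r, viewing `S_L(ℓ,r) = ∫_{-∞}^{(ℓ+r)/2} f(x) g0(|ℓ−x|/γ) dx`
as a function of the loyalty parameter γ > 0, we have `S_L(ℓ,r) ∼ 2γ f(ℓ)` as γ → 0⁺, i.e.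
`lim_{γ→0+} S_L(ℓ,r)/γ = 2 f(ℓ)`. -/
theorem stmt_14
    (f : ℝ → ℝ)
    (hf_smooth : ContDiff ℝ 1 f)
    (hf_bdd : ∃ M, ∀ x, |f x| ≤ M)
    (hf'_bdd : ∃ M, ∀ x, |deriv f x| ≤ M)
    (hf_pos : ∀ x, 0 < f x)
    (hf_total : ∫ x, f x = 1)
    (hf_median : ∫ x in Iic (0 : ℝ), f x = 1 / 2)
    (g0 : ℝ → ℝ)
    (hg0_cont : ContinuousOn g0 (Ici 0))
    (hg0_pos : ∀ z ∈ Ici (0 : ℝ), 0 < g0 z)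
    (hg0_le_one : ∀ z ∈ Ici (0 : ℝ), g0 z ≤ 1)
    (hg0_anti : AntitoneOn g0 (Ici 0))
    (hg0_zero : g0 0 = 1)
    (hg0_decay : g0 =O[atTop] fun z => 1 / z ^ 2)
    (hg0_int : ∫ z in Ioi (0 : ℝ), g0 z = 1)
    (ℓ r : ℝ) (hℓr : ℓ < r) :
    Tendsto (fun γ : ℝ => (∫ x in Iic ((ℓ + r) / 2), f x * g0 (|ℓ - x| / γ)) / γ)
      (𝓝[>] 0) (𝓝 (2 * f ℓ)) := by
  obtain ⟨M, hM⟩ := hf_bdd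
  have hM0 : 0 ≤ M := (abs_nonneg _).trans (hM 0)
  set m : ℝ := (ℓ + r) / 2 with hm
  have hℓm : ℓ < m := by rw [hm]; linarith
  -- continuity of u ↦ g0 |u|
  have hGc : Continuous fun u : ℝ => g0 |u| := by
    rw [← continuousOn_univ]
    exact hg0_cont.comp continuous_abs.continuousOn fun x _ => abs_nonneg x
  -- integrability of g0 on Ioi 0
  have hg0_intble : IntegrableOn g0 (Ioi (0 : ℝ)) := by
    by_contra h
    rw [integral_undef h] at hg0_int
    norm_num at hg0_int
  -- integrability of u ↦ g0 |u| on ℝ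
  have hGint : Integrable fun u : ℝ => g0 |u| := by
    have hIci : IntegrableOn (fun u : ℝ => g0 |u|) (Ici 0) := by
      rw [integrableOn_congr_fun (fun x hx => by rw [abs_of_nonneg hx]) measurableSet_Ici]
      exact (integrableOn_Ici_iff_integrableOn_Ioi (by simp)).mpr hg0_intble
    have hIio : IntegrableOn (fun u : ℝ => g0 |u|) (Iio 0) := by
      rw [← Measure.map_neg_eq_self (volume : Measure ℝ)]
      have m' : MeasurableEmbedding fun x : ℝ => -x := (Homeomorph.neg ℝ).measurableEmbedding
      rw [m'.integrableOn_map_iff]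
      simp_rw [Function.comp_def, abs_neg, neg_preimage, neg_Iio, neg_zero]
      exact hIci.mono_set Ioi_subset_Ici_self
    have := hIio.union hIci
    rw [Iio_union_Ici] at this
    exact integrableOn_univ.mp this
  have hGval : (∫ u : ℝ, g0 |u|) = 2 := by
    rw [integral_comp_abs, hg0_int]; norm_num
  -- the rescaled family
  set F : ℝ → ℝ → ℝ := fun γ u =>
    (Iic ((m - ℓ) / γ)).indicator (fun u => f (γ * u + ℓ) * g0 |u|) u with hF
  -- substitution identity
  have key : ∀ γ : ℝ, 0 < γ →
      (∫ x in Iic m, f x * g0 (|ℓ - x| / γ)) / γ = ∫ u, F γ u := by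
    intro γ hγ
    set h : ℝ → ℝ := (Iic m).indicator (fun x => f x * g0 (|ℓ - x| / γ)) with hh
    have h1 : ∫ x in Iic m, f x * g0 (|ℓ - x| / γ) = ∫ x, h x :=
      (integral_indicator measurableSet_Iic).symm
    have h2 : ∫ u, h (γ * u + ℓ) = |γ⁻¹| • ∫ x, h x := by
      calc ∫ u, h (γ * u + ℓ) = ∫ u, (fun v => h (v + ℓ)) (γ * u) := rfl
        _ = |γ⁻¹| • ∫ v, h (v + ℓ) := Measure.integral_comp_mul_left (fun v => h (v + ℓ)) γ
        _ = |γ⁻¹| • ∫ x, h x := by rw [integral_add_right_eq_self]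
    have h3 : ∀ u, F γ u = h (γ * u + ℓ) := by
      intro u
      have hmem : γ * u + ℓ ∈ Iic m ↔ u ∈ Iic ((m - ℓ) / γ) := by
        simp only [mem_Iic, le_div_iff₀ hγ]
        constructor <;> intro hx <;> nlinarith
      have hval : f (γ * u + ℓ) * g0 (|ℓ - (γ * u + ℓ)| / γ) = f (γ * u + ℓ) * g0 |u| := by
        congr 1
        have : |ℓ - (γ * u + ℓ)| = γ * |u| := by
          rw [show ℓ - (γ * u + ℓ) = -(γ * u) by ring, abs_neg, abs_mul, abs_of_pos hγ]
        rw [this, mul_comm, mul_div_assoc, div_self hγ.ne', mul_one]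
      by_cases hu : u ∈ Iic ((m - ℓ) / γ)
      · rw [hF]; simp only []
        rw [indicator_of_mem hu, hh, indicator_of_mem (hmem.mpr hu), hval]
      · rw [hF]; simp only []
        rw [indicator_of_notMem hu, hh, indicator_of_notMem (fun c => hu (hmem.mp c))]
    rw [h1, show (∫ u, F γ u) = ∫ u, h (γ * u + ℓ) from integral_congr_ae
      (Eventually.of_forall h3), h2, abs_of_pos (inv_pos.mpr hγ), smul_eq_mul, div_eq_inv_mul]
  -- dominated convergence
  have hDCT : Tendsto (fun γ : ℝ => ∫ u, F γ u) (𝓝[>] 0) (𝓝 (∫ u, f ℓ * g0 |u|)) := by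
    apply tendsto_integral_filter_of_dominated_convergence (fun u => M * g0 |u|)
    · exact Eventually.of_forall fun γ =>
        ((hf_smooth.continuous.comp (by continuity)).mul hGc).aestronglyMeasurable.indicator
          measurableSet_Iic
    · refine Eventually.of_forall fun γ => Eventually.of_forall fun u => ?_
      have hg0u : 0 ≤ g0 |u| := (hg0_pos _ (abs_nonneg u)).le
      by_cases hu : u ∈ Iic ((m - ℓ) / γ)
      · rw [hF]; simp only []
        rw [indicator_of_mem hu, Real.norm_eq_abs, abs_mul, abs_of_nonneg hg0u]
        exact mul_le_mul_of_nonneg_right (hM _) hg0u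
      · rw [hF]; simp only []
        rw [indicator_of_notMem hu, norm_zero]
        positivity
    · exact hGint.const_mul M
    · refine Eventually.of_forall fun u => ?_
      have hev : ∀ᶠ γ in 𝓝[>] (0 : ℝ), F γ u = f (γ * u + ℓ) * g0 |u| := by
        have hc : (0 : ℝ) < (m - ℓ) / (|u| + 1) := by
          apply div_pos (by linarith) (by positivity)
        filter_upwards [Ioo_mem_nhdsGT hc]
          with γ hγ
        have hγ0 : 0 < γ := hγ.1
        have hu : u ∈ Iic ((m - ℓ) / γ) := by
          rw [mem_Iic, le_div_iff₀ hγ0]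
          have h1 : γ * (|u| + 1) < m - ℓ := (lt_div_iff₀ (by positivity)).mp hγ.2
          have := le_abs_self u
          nlinarith
        rw [hF]; simp only []; rw [indicator_of_mem hu]
      rw [hF]
      refine Tendsto.congr' (hev.mono fun γ h => h.symm) ?_
      have : Tendsto (fun γ : ℝ => γ * u + ℓ) (𝓝[>] 0) (𝓝 ℓ) := by
        have : Tendsto (fun γ : ℝ => γ * u + ℓ) (𝓝 0) (𝓝 (0 * u + ℓ)) := by
          exact (tendsto_id.mul_const u).add_const ℓ
        simpa using this.mono_left nhdsWithin_le_nhds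
      exact ((hf_smooth.continuous.tendsto ℓ).comp this).mul_const _
  have hval : (∫ u, f ℓ * g0 |u|) = 2 * f ℓ := by
    rw [integral_const_mul, hGval]; ring
  rw [← hval]
  exact hDCT.congr' (by filter_upwards [self_mem_nhdsWithin] with γ hγ using (key γ hγ).symm)
end

section
/- Fix real numbers ℓ < r, and regard S_L(ℓ,r) as a function of the loyalty parameter γ > 0 through g(z) = g_0(z/γ). Then ∂S_L/∂ℓ(ℓ,r) ∼ 2γ f′(ℓ) as γ → 0+, i.e., lim_{γ→0+} (1/γ) ∂S_L/∂ℓ(ℓ,r) = 2 f′(ℓ). -/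
open MeasureTheory Set Filter Topology Asymptotics

lemma aux_integrable_comp_abs {g : ℝ → ℝ} (hg : IntegrableOn g (Ioi (0:ℝ))) :
    Integrable (fun y : ℝ => g |y|) := by
  have hIoi : IntegrableOn (fun y : ℝ => g |y|) (Ioi 0) :=
    hg.congr_fun (fun x hx => by rw [abs_of_pos hx]) measurableSet_Ioi
  have hIic : IntegrableOn (fun y : ℝ => g |y|) (Iic 0) := by
    rw [← Measure.map_neg_eq_self (volume : Measure ℝ)]
    have m : MeasurableEmbedding fun x : ℝ => -x := (Homeomorph.neg ℝ).measurableEmbedding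
    rw [m.integrableOn_map_iff]
    simp_rw [Function.comp_def, abs_neg, neg_preimage, neg_Iic, neg_zero]
    exact (integrableOn_Ici_iff_integrableOn_Ioi (by simp)).mpr hIoi
  have := hIic.union hIoi
  rwa [Iic_union_Ioi, integrableOn_univ] at this

lemma aux_setIntegral_shift (φ : ℝ → ℝ) (l m : ℝ) :
    ∫ x in Ioi m, φ x = ∫ w in Ioi (m - l), φ (l + w) := by
  have hemb : MeasurableEmbedding fun w : ℝ => l + w :=
    (Homeomorph.addLeft l).measurableEmbedding
  have hmap : Measure.map (fun w : ℝ => l + w) volume = volume :=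
    MeasureTheory.map_add_left_eq_self volume l
  have hpre : (fun w : ℝ => l + w) ⁻¹' Ioi m = Ioi (m - l) := by
    ext w; simp [lt_sub_iff_add_lt, add_comm]
  calc ∫ x in Ioi m, φ x
      = ∫ x in Ioi m, φ x ∂(Measure.map (fun w : ℝ => l + w) volume) := by rw [hmap]
    _ = ∫ w in (fun w : ℝ => l + w) ⁻¹' Ioi m, φ (l + w) := hemb.setIntegral_map φ (Ioi m)
    _ = ∫ w in Ioi (m - l), φ (l + w) := by rw [hpre]

lemma aux_integral_Ioi_split {ψ : ℝ → ℝ} (hψ : IntegrableOn ψ (Ioi (0:ℝ)))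
    {a c : ℝ} (ha : 0 ≤ a) (hc : 0 ≤ c) :
    ∫ w in Ioi a, ψ w = (∫ w in Ioi c, ψ w) + ∫ w in a..c, ψ w := by
  rcases le_total a c with h | h
  · rw [intervalIntegral.integral_of_le h]
    rw [← Ioc_union_Ioi_eq_Ioi h]
    rw [setIntegral_union (Ioc_disjoint_Ioi le_rfl) measurableSet_Ioi
      (hψ.mono_set (fun x hx => lt_of_le_of_lt ha hx.1))
      (hψ.mono_set (Ioi_subset_Ioi hc))]
    ring
  · rw [intervalIntegral.integral_of_ge h, ← Ioc_union_Ioi_eq_Ioi h,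
      setIntegral_union (Ioc_disjoint_Ioi le_rfl) measurableSet_Ioi
      (hψ.mono_set (fun x hx => lt_of_le_of_lt hc hx.1))
      (hψ.mono_set (Ioi_subset_Ioi ha))]
    ring

lemma aux_tail {g0 : ℝ → ℝ} (h : IntegrableOn g0 (Ioi (0:ℝ))) :
    Tendsto (fun T => ∫ u in Ioi T, g0 u) atTop (𝓝 0) := by
  have h1 : Tendsto (fun T => ∫ u in (0:ℝ)..T, g0 u) atTop (𝓝 (∫ u in Ioi (0:ℝ), g0 u)) :=
    intervalIntegral_tendsto_integral_Ioi 0 h tendsto_id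
  have h2 : Tendsto (fun T => (∫ u in Ioi (0:ℝ), g0 u) - ∫ u in (0:ℝ)..T, g0 u) atTop
      (𝓝 ((∫ u in Ioi (0:ℝ), g0 u) - ∫ u in Ioi (0:ℝ), g0 u)) := tendsto_const_nhds.sub h1
  rw [sub_self] at h2
  refine h2.congr' ?_
  filter_upwards [eventually_ge_atTop (0:ℝ)] with T hT
  have := aux_integral_Ioi_split h hT le_rfl
  rw [this, intervalIntegral.integral_symm]
  ring

lemma aux_deriv
    (f : ℝ → ℝ) (hf_smooth : ContDiff ℝ 1 f)
    {M M' : ℝ} (hM : ∀ x, |f x| ≤ M) (hM' : ∀ x, |deriv f x| ≤ M')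
    (g0 : ℝ → ℝ)
    (hg0_cont : ContinuousOn g0 (Ici 0))
    (hg0_pos : ∀ z ∈ Ici (0 : ℝ), 0 < g0 z)
    (hg0_le_one : ∀ z ∈ Ici (0 : ℝ), g0 z ≤ 1)
    (hg0_integrable : IntegrableOn g0 (Ioi (0:ℝ)))
    (ℓ r : ℝ) (hℓr : ℓ < r) (γ : ℝ) (hγ : 0 < γ) :
    deriv (fun l => ∫ x in Iic ((l + r) / 2), f x * g0 (|l - x| / γ)) ℓ =
      (∫ y : ℝ, deriv f (ℓ - y) * g0 (|y| / γ))
        - (∫ w in Ioi ((r - ℓ) / 2), deriv f (ℓ + w) * g0 (w / γ))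
        - f (ℓ + (r - ℓ) / 2) * g0 ((r - ℓ) / 2 / γ) * (1 / 2) := by
  set c : ℝ := (r - ℓ) / 2 with hc
  have hcpos : 0 < c := div_pos (sub_pos.2 hℓr) two_pos
  have hfd : Differentiable ℝ f := hf_smooth.differentiable one_ne_zero
  have hfc : Continuous f := hf_smooth.continuous
  have hf'c : Continuous (deriv f) := hf_smooth.continuous_deriv le_rfl
  have hM'0 : 0 ≤ M' := (abs_nonneg _).trans (hM' 0)
  set φ : ℝ → ℝ := fun y => g0 (|y| / γ) with hφdef
  have hψ_cont : Continuous fun y : ℝ => g0 |y| :=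
    hg0_cont.comp_continuous continuous_abs fun y => abs_nonneg y
  have hφ_cont : Continuous φ :=
    hg0_cont.comp_continuous (continuous_abs.div_const γ)
      fun y => mem_Ici.2 (div_nonneg (abs_nonneg y) hγ.le)
  have hψ_int : Integrable (fun y : ℝ => g0 |y|) := aux_integrable_comp_abs hg0_integrable
  have hφ_int : Integrable φ := by
    have := hψ_int.comp_mul_right' (inv_ne_zero hγ.ne')
    simpa only [← div_eq_mul_inv, abs_div, abs_of_pos hγ] using this
  have hφ_nonneg : ∀ y, 0 ≤ φ y :=
    fun y => (hg0_pos _ (mem_Ici.2 (div_nonneg (abs_nonneg y) hγ.le))).le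
  have hgcont' : ContinuousOn (fun w : ℝ => g0 (w / γ)) (Ici 0) :=
    hg0_cont.comp (continuousOn_id.div_const γ) fun x hx => by
      simpa using div_nonneg hx hγ.le
  have hgγ_Ioi : ∀ {t : ℝ}, 0 ≤ t → IntegrableOn (fun w => g0 (w / γ)) (Ioi t) := by
    intro t ht
    refine (hφ_int.integrableOn).congr_fun (fun w hw => ?_) measurableSet_Ioi
    have : |w| = w := abs_of_pos (ht.trans_lt hw)
    simp only [hφdef, this]
  -- derivative of the whole-line part
  have hA : HasDerivAt (fun l => ∫ y : ℝ, f (l - y) * φ y)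
      (∫ y : ℝ, deriv f (ℓ - y) * φ y) ℓ := by
    have key := hasDerivAt_integral_of_dominated_loc_of_deriv_le (𝕜 := ℝ)
      (F := fun l y => f (l - y) * φ y) (F' := fun l y => deriv f (l - y) * φ y)
      (x₀ := ℓ) (bound := fun y => M' * φ y) (Metric.ball_mem_nhds ℓ one_pos)
      (.of_forall fun l =>
        ((hfc.comp (continuous_const.sub continuous_id)).mul hφ_cont).aestronglyMeasurable)
      (hφ_int.bdd_mul (hfc.comp (continuous_const.sub continuous_id)).aestronglyMeasurable
        (c := M) (.of_forall fun y => by simpa using hM _))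
      (((hf'c.comp (continuous_const.sub continuous_id)).mul hφ_cont).aestronglyMeasurable)
      (.of_forall fun y l _ => by
        rw [Real.norm_eq_abs, abs_mul, abs_of_nonneg (hφ_nonneg y)]
        exact mul_le_mul_of_nonneg_right (hM' _) (hφ_nonneg y))
      (hφ_int.const_mul M')
      (.of_forall fun y l _ => by
        have h1 : HasDerivAt (fun l => f (l - y)) (deriv f (l - y)) l := by
          simpa [Function.comp_def] using ((hfd (l - y)).hasDerivAt).comp l ((hasDerivAt_id l).sub_const y)
        exact h1.mul_const (φ y))
    exact key.2
  -- derivative of the fixed-tail part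
  have hH : HasDerivAt (fun l => ∫ w in Ioi c, f (l + w) * g0 (w / γ))
      (∫ w in Ioi c, deriv f (ℓ + w) * g0 (w / γ)) ℓ := by
    have key := hasDerivAt_integral_of_dominated_loc_of_deriv_le (𝕜 := ℝ)
      (μ := volume.restrict (Ioi c))
      (F := fun l w => f (l + w) * g0 (w / γ)) (F' := fun l w => deriv f (l + w) * g0 (w / γ))
      (x₀ := ℓ) (bound := fun w => M' * g0 (w / γ)) (Metric.ball_mem_nhds ℓ one_pos)
      (.of_forall fun l =>
        (((hfc.comp (continuous_const.add continuous_id)).continuousOn.mul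
          (hgcont'.mono (Ioi_subset_Ici hcpos.le))).aestronglyMeasurable measurableSet_Ioi))
      ((hgγ_Ioi hcpos.le).bdd_mul
        (hfc.comp (continuous_const.add continuous_id)).aestronglyMeasurable
        (c := M) (.of_forall fun w => by simpa using hM _))
      (((hf'c.comp (continuous_const.add continuous_id)).continuousOn.mul
          (hgcont'.mono (Ioi_subset_Ici hcpos.le))).aestronglyMeasurable measurableSet_Ioi)
      ((ae_restrict_iff' measurableSet_Ioi).2 (.of_forall fun w hw l _ => by
        have hw0 : (0:ℝ) ≤ g0 (w / γ) :=
          (hg0_pos _ (mem_Ici.2 (div_nonneg (hcpos.le.trans (le_of_lt hw)) hγ.le))).le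
        rw [Real.norm_eq_abs, abs_mul, abs_of_nonneg hw0]
        exact mul_le_mul_of_nonneg_right (hM' _) hw0))
      ((hgγ_Ioi hcpos.le).const_mul M')
      (.of_forall fun w l _ => by
        have h1 : HasDerivAt (fun l => f (l + w)) (deriv f (l + w)) l := by
          simpa [Function.comp_def] using ((hfd (l + w)).hasDerivAt).comp l ((hasDerivAt_id l).add_const w)
        exact h1.mul_const (g0 (w / γ)))
    exact key.2
  -- the boundary piece
  set ψ0 : ℝ → ℝ := fun w => f (ℓ + w) * g0 (w / γ) with hψ0def
  have hψ0_contOn : ContinuousOn ψ0 (Ici 0) :=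
    (hfc.comp (continuous_const.add continuous_id)).continuousOn.mul hgcont'
  have hψ0_contAt : ContinuousAt ψ0 c :=
    hψ0_contOn.continuousAt (mem_of_superset (Ioi_mem_nhds hcpos) Ioi_subset_Ici_self)
  have hG : HasDerivAt (fun u => ∫ w in c..u, ψ0 w) (ψ0 c) c := by
    apply intervalIntegral.integral_hasDerivAt_right
    · rw [intervalIntegrable_iff]
      simp [Set.uIoc]
    · exact ⟨Ioi 0, Ioi_mem_nhds hcpos,
        (hψ0_contOn.mono Ioi_subset_Ici_self).aestronglyMeasurable measurableSet_Ioi⟩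
    · exact hψ0_contAt
  have ha' : HasDerivAt (fun l : ℝ => (r - l) / 2) (-1 / 2 : ℝ) ℓ := by
    have h1 : HasDerivAt (fun l : ℝ => r - l) (-1) ℓ := (hasDerivAt_id ℓ).const_sub r
    exact h1.div_const 2
  have haℓ : (r - ℓ) / 2 = c := rfl
  have hK1 : HasDerivAt (fun l => -(∫ w in c..(r - l) / 2, ψ0 w)) (ψ0 c * (1 / 2)) ℓ := by
    have hcomp : HasDerivAt (fun l => ∫ w in c..(r - l) / 2, ψ0 w) (ψ0 c * (-1 / 2)) ℓ := by
      have := (haℓ ▸ hG).comp ℓ ha'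
      simpa [Function.comp_def, ← hc] using this
    exact hcomp.neg.congr_deriv (by ring)
  have hK2 : HasDerivAt
      (fun l => ∫ w in ((r - l) / 2)..c, (f (l + w) - f (ℓ + w)) * g0 (w / γ)) 0 ℓ := by
    rw [hasDerivAt_iff_isLittleO]
    have hK2ℓ : (∫ w in ((r - ℓ) / 2)..c, (f (ℓ + w) - f (ℓ + w)) * g0 (w / γ)) = 0 := by
      simp
    have hlip : ∀ x y : ℝ, |f x - f y| ≤ M' * |x - y| := by
      intro x y
      have := convex_univ.norm_image_sub_le_of_norm_deriv_le (f := f)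
        (fun z _ => hfd z) (fun z _ => by simpa [Real.norm_eq_abs] using hM' z)
        (mem_univ y) (mem_univ x)
      simpa [Real.norm_eq_abs] using this
    have h1 : (fun l => ∫ w in ((r - l) / 2)..c, (f (l + w) - f (ℓ + w)) * g0 (w / γ))
        =O[𝓝 ℓ] fun l => (l - ℓ) ^ 2 := by
      rw [isBigO_iff]
      refine ⟨M' / 2, ?_⟩
      filter_upwards [Metric.ball_mem_nhds ℓ hcpos] with l hl
      have hl' : |l - ℓ| < c := by simpa [Real.dist_eq] using hl
      have hl2 := abs_lt.1 hl'
      have hl2' : -((r - ℓ) / 2) < l - ℓ ∧ l - ℓ < (r - ℓ) / 2 := by rw [← hc]; exact hl2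
      have halpos : 0 < (r - l) / 2 := by
        have := hl2'.2; linarith
      have hb := intervalIntegral.norm_integral_le_of_norm_le_const
        (C := M' * |l - ℓ|) (f := fun w => (f (l + w) - f (ℓ + w)) * g0 (w / γ))
        (a := (r - l) / 2) (b := c) ?_
      · calc ‖∫ w in ((r - l) / 2)..c, (f (l + w) - f (ℓ + w)) * g0 (w / γ)‖
            ≤ M' * |l - ℓ| * |c - (r - l) / 2| := hb
          _ = M' / 2 * ‖(l - ℓ) ^ 2‖ := by
            have h3 : c - (r - l) / 2 = (l - ℓ) / 2 := by rw [hc]; ring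
            have habs : |l - ℓ| * |l - ℓ| = (l - ℓ) ^ 2 := by
              rw [abs_mul_abs_self]; ring
            rw [h3, Real.norm_eq_abs, abs_div, abs_two, abs_of_nonneg (sq_nonneg (l - ℓ))]
            linear_combination (M' / 2) * habs
      · intro w hw
        have hwpos : 0 < w := lt_of_le_of_lt (le_inf halpos.le hcpos.le) hw.1
        have hmem : w / γ ∈ Ici (0:ℝ) := mem_Ici.2 (div_nonneg hwpos.le hγ.le)
        have hg01 : |g0 (w / γ)| ≤ 1 := by
          rw [abs_of_pos (hg0_pos _ hmem)]; exact hg0_le_one _ hmem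
        calc ‖(f (l + w) - f (ℓ + w)) * g0 (w / γ)‖
            = |f (l + w) - f (ℓ + w)| * |g0 (w / γ)| := by rw [Real.norm_eq_abs, abs_mul]
          _ ≤ M' * |l - ℓ| * 1 := by
              apply mul_le_mul _ hg01 (abs_nonneg _) (by positivity)
              simpa [add_sub_add_right_eq_sub] using hlip (l + w) (ℓ + w)
          _ = M' * |l - ℓ| := mul_one _
    have h2 : (fun l : ℝ => (l - ℓ) ^ 2) =o[𝓝 ℓ] fun l => l - ℓ := by
      have h3 : Tendsto (fun l : ℝ => l - ℓ) (𝓝 ℓ) (𝓝 0) := by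
        simpa using (continuous_sub_right ℓ).tendsto ℓ
      have h4 : (fun l : ℝ => l - ℓ) =o[𝓝 ℓ] (fun _ => (1:ℝ)) := (isLittleO_one_iff ℝ).2 h3
      simpa [pow_two] using h4.mul_isBigO (isBigO_refl (fun l : ℝ => l - ℓ) (𝓝 ℓ))
    simpa [hK2ℓ] using h1.trans_isLittleO h2
  -- eventual equality near ℓ
  have hev : (fun l => ∫ x in Iic ((l + r) / 2), f x * g0 (|l - x| / γ)) =ᶠ[𝓝 ℓ]
      fun l => (∫ y : ℝ, f (l - y) * φ y) - (∫ w in Ioi c, f (l + w) * g0 (w / γ))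
        - ((-(∫ w in c..(r - l) / 2, ψ0 w))
            + ∫ w in ((r - l) / 2)..c, (f (l + w) - f (ℓ + w)) * g0 (w / γ)) := by
    filter_upwards [Metric.ball_mem_nhds ℓ hcpos] with l hl
    have hl' : |l - ℓ| < c := by simpa [Real.dist_eq] using hl
    have hl2 := abs_lt.1 hl'
    have hl2' : -((r - ℓ) / 2) < l - ℓ ∧ l - ℓ < (r - ℓ) / 2 := by rw [← hc]; exact hl2
    have halpos : 0 < (r - l) / 2 := by have := hl2'.2; linarith
    have hint1 : Integrable fun x => f x * φ (l - x) :=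
      (hφ_int.comp_sub_left l).bdd_mul hfc.aestronglyMeasurable
        (c := M) (.of_forall fun x => by simpa using hM x)
    have e1 : (∫ x in Iic ((l + r) / 2), f x * g0 (|l - x| / γ))
        = (∫ x, f x * φ (l - x)) - ∫ x in Ioi ((l + r) / 2), f x * φ (l - x) := by
      have h := integral_add_compl (measurableSet_Iic (a := (l + r) / 2)) hint1
      rw [compl_Iic] at h
      have h2 : (∫ x in Iic ((l + r) / 2), f x * g0 (|l - x| / γ))
          = ∫ x in Iic ((l + r) / 2), f x * φ (l - x) := rfl
      rw [h2]; linarith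
    have e2 : (∫ x, f x * φ (l - x)) = ∫ y, f (l - y) * φ y := by
      have h := integral_sub_left_eq_self (fun x => f x * φ (l - x)) volume l
      rw [← h]
      congr 1
      funext x
      rw [sub_sub_cancel]
    have e3 : (∫ x in Ioi ((l + r) / 2), f x * φ (l - x))
        = ∫ w in Ioi ((r - l) / 2), f (l + w) * g0 (w / γ) := by
      rw [aux_setIntegral_shift (fun x => f x * φ (l - x)) l ((l + r) / 2)]
      have hs : (l + r) / 2 - l = (r - l) / 2 := by ring
      rw [hs]
      refine setIntegral_congr_fun measurableSet_Ioi fun w hw => ?_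
      have hwpos : 0 < w := halpos.trans hw
      have habs : |l - (l + w)| = w := by
        rw [show l - (l + w) = -w by ring, abs_neg, abs_of_pos hwpos]
      simp only [hφdef, habs]
    have hintψl : IntegrableOn (fun w => f (l + w) * g0 (w / γ)) (Ioi 0) :=
      (hgγ_Ioi le_rfl).bdd_mul
        (hfc.comp (continuous_const.add continuous_id)).aestronglyMeasurable
        (c := M) (.of_forall fun w => by simpa using hM _)
    have e4 := aux_integral_Ioi_split hintψl halpos.le hcpos.le
    have hsub : uIcc ((r - l) / 2) c ⊆ Ici (0:ℝ) :=
      fun x hx => le_trans (le_inf halpos.le hcpos.le) hx.1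
    have hi1 : IntervalIntegrable (fun w => f (ℓ + w) * g0 (w / γ)) volume ((r - l) / 2) c :=
      ContinuousOn.intervalIntegrable (hψ0_contOn.mono hsub)
    have hi2 : IntervalIntegrable (fun w => (f (l + w) - f (ℓ + w)) * g0 (w / γ))
        volume ((r - l) / 2) c := by
      apply ContinuousOn.intervalIntegrable
      exact (((hfc.comp (continuous_const.add continuous_id)).sub
        (hfc.comp (continuous_const.add continuous_id))).continuousOn).mul (hgcont'.mono hsub)
    have e5 : (∫ w in ((r - l) / 2)..c, f (l + w) * g0 (w / γ))
        = (∫ w in ((r - l) / 2)..c, f (ℓ + w) * g0 (w / γ))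
          + ∫ w in ((r - l) / 2)..c, (f (l + w) - f (ℓ + w)) * g0 (w / γ) := by
      rw [← intervalIntegral.integral_add hi1 hi2]
      apply intervalIntegral.integral_congr
      intro w _
      dsimp only
      ring
    have e6 : (∫ w in ((r - l) / 2)..c, f (ℓ + w) * g0 (w / γ))
        = -(∫ w in c..(r - l) / 2, ψ0 w) := by
      rw [intervalIntegral.integral_symm]
    rw [e1, e2, e3, e4, e5, e6]
    ring
  have hsum : HasDerivAt
      (fun l => (∫ y : ℝ, f (l - y) * φ y) - (∫ w in Ioi c, f (l + w) * g0 (w / γ))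
        - ((-(∫ w in c..(r - l) / 2, ψ0 w))
            + ∫ w in ((r - l) / 2)..c, (f (l + w) - f (ℓ + w)) * g0 (w / γ)))
      ((∫ y : ℝ, deriv f (ℓ - y) * φ y) - (∫ w in Ioi c, deriv f (ℓ + w) * g0 (w / γ))
        - (ψ0 c * (1 / 2) + 0)) ℓ :=
    (hA.sub hH).sub (hK1.add hK2)
  have hF := hsum.congr_of_eventuallyEq hev
  rw [hF.deriv]
  simp only [hφdef, hψ0def, add_zero]

/-- For fixed ℓ < r, viewing `S_L(ℓ,r)` as a function of the loyalty parameter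
γ > 0 through `g(z) = g0(z/γ)`, we have `∂S_L/∂ℓ(ℓ,r) ∼ 2γ f′(ℓ)` as γ → 0⁺, i.e.
`lim_{γ→0+} (1/γ) ∂S_L/∂ℓ(ℓ,r) = 2 f′(ℓ)`. -/
theorem stmt_17
    (f : ℝ → ℝ)
    (hf_smooth : ContDiff ℝ 1 f)
    (hf_bdd : ∃ M, ∀ x, |f x| ≤ M)
    (hf'_bdd : ∃ M, ∀ x, |deriv f x| ≤ M)
    (hf_pos : ∀ x, 0 < f x)
    (hf_total : ∫ x, f x = 1)
    (hf_median : ∫ x in Iic (0 : ℝ), f x = 1 / 2)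
    (g0 : ℝ → ℝ)
    (hg0_cont : ContinuousOn g0 (Ici 0))
    (hg0_pos : ∀ z ∈ Ici (0 : ℝ), 0 < g0 z)
    (hg0_le_one : ∀ z ∈ Ici (0 : ℝ), g0 z ≤ 1)
    (hg0_anti : AntitoneOn g0 (Ici 0))
    (hg0_zero : g0 0 = 1)
    (hg0_decay : g0 =O[atTop] fun z => 1 / z ^ 2)
    (hg0_int : ∫ z in Ioi (0 : ℝ), g0 z = 1)
    (ℓ r : ℝ) (hℓr : ℓ < r) :
    Tendsto (fun γ : ℝ =>
        (deriv (fun l => ∫ x in Iic ((l + r) / 2), f x * g0 (|l - x| / γ)) ℓ) / γ)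
      (𝓝[>] 0) (𝓝 (2 * deriv f ℓ)) := by
  obtain ⟨M, hM⟩ := hf_bdd
  obtain ⟨M', hM'⟩ := hf'_bdd
  have hM'0 : 0 ≤ M' := (abs_nonneg _).trans (hM' 0)
  have hfd : Differentiable ℝ f := hf_smooth.differentiable one_ne_zero
  have hfc : Continuous f := hf_smooth.continuous
  have hf'c : Continuous (deriv f) := hf_smooth.continuous_deriv le_rfl
  set c : ℝ := (r - ℓ) / 2 with hc
  have hcpos : 0 < c := div_pos (sub_pos.2 hℓr) two_pos
  have hg0_integrable : IntegrableOn g0 (Ioi (0:ℝ)) := by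
    by_contra h
    rw [MeasureTheory.integral_undef h] at hg0_int
    exact one_ne_zero hg0_int.symm
  have hψ_cont : Continuous fun y : ℝ => g0 |y| :=
    hg0_cont.comp_continuous continuous_abs fun y => abs_nonneg y
  have hψ_int : Integrable (fun y : ℝ => g0 |y|) := aux_integrable_comp_abs hg0_integrable
  have hψ_nonneg : ∀ y : ℝ, 0 ≤ g0 |y| := fun y => (hg0_pos _ (mem_Ici.2 (abs_nonneg y))).le
  have hψ_total : (∫ y : ℝ, g0 |y|) = 2 := by
    rw [integral_comp_abs (f := g0), hg0_int]; norm_num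
  -- the three pieces
  have hP1 : Tendsto (fun γ : ℝ => (∫ y : ℝ, deriv f (ℓ - y) * g0 (|y| / γ)) / γ)
      (𝓝[>] 0) (𝓝 (2 * deriv f ℓ)) := by
    have heq : ∀ γ : ℝ, 0 < γ →
        (∫ y : ℝ, deriv f (ℓ - y) * g0 (|y| / γ)) / γ
          = ∫ u : ℝ, deriv f (ℓ - γ * u) * g0 |u| := by
      intro γ hγ
      have h := MeasureTheory.Measure.integral_comp_mul_left
        (fun y => deriv f (ℓ - y) * g0 (|y| / γ)) γ
      rw [abs_of_pos (inv_pos.2 hγ), smul_eq_mul] at h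
      rw [div_eq_inv_mul, ← h]
      congr 1
      funext u
      rw [abs_mul, abs_of_pos hγ, mul_div_cancel_left₀ _ hγ.ne']
    have hlim : Tendsto (fun γ : ℝ => ∫ u : ℝ, deriv f (ℓ - γ * u) * g0 |u|)
        (𝓝[>] 0) (𝓝 (∫ u : ℝ, deriv f ℓ * g0 |u|)) := by
      apply tendsto_integral_filter_of_dominated_convergence (bound := fun u => M' * g0 |u|)
      · exact .of_forall fun γ =>
          ((hf'c.comp (continuous_const.sub (continuous_const.mul continuous_id))).mul
            hψ_cont).aestronglyMeasurable
      · refine .of_forall fun γ => .of_forall fun u => ?_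
        rw [Real.norm_eq_abs, abs_mul, abs_of_nonneg (hψ_nonneg u)]
        exact mul_le_mul_of_nonneg_right (hM' _) (hψ_nonneg u)
      · exact hψ_int.const_mul M'
      · refine .of_forall fun u => ?_
        have h1 : Tendsto (fun γ : ℝ => ℓ - γ * u) (𝓝 0) (𝓝 ℓ) := by
          have hco : Continuous fun γ : ℝ => ℓ - γ * u :=
            continuous_const.sub (continuous_id.mul continuous_const)
          simpa using hco.tendsto (0:ℝ)
        exact ((hf'c.tendsto ℓ).comp (h1.mono_left nhdsWithin_le_nhds)).mul_const _
    have htot : (∫ u : ℝ, deriv f ℓ * g0 |u|) = 2 * deriv f ℓ := by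
      rw [integral_const_mul, hψ_total]; ring
    rw [← htot]
    refine hlim.congr' ?_
    filter_upwards [self_mem_nhdsWithin] with γ hγ
    exact (heq γ hγ).symm
  have hgγ_Ioi : ∀ {γ : ℝ}, 0 < γ → ∀ {t : ℝ}, 0 ≤ t →
      IntegrableOn (fun w => g0 (w / γ)) (Ioi t) := by
    intro γ hγ t ht
    have hφ_int : Integrable (fun y : ℝ => g0 (|y| / γ)) := by
      have := hψ_int.comp_mul_right' (inv_ne_zero hγ.ne')
      simpa only [← div_eq_mul_inv, abs_div, abs_of_pos hγ] using this
    refine (hφ_int.integrableOn).congr_fun (fun w hw => ?_) measurableSet_Ioi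
    have : |w| = w := abs_of_pos (ht.trans_lt hw)
    simp only [this]
  have hP2 : Tendsto (fun γ : ℝ => (∫ w in Ioi c, deriv f (ℓ + w) * g0 (w / γ)) / γ)
      (𝓝[>] 0) (𝓝 0) := by
    have htail : Tendsto (fun γ : ℝ => M' * ∫ u in Ioi (c * γ⁻¹), g0 u) (𝓝[>] 0) (𝓝 0) := by
      have h1 : Tendsto (fun γ : ℝ => c * γ⁻¹) (𝓝[>] 0) atTop :=
        Tendsto.const_mul_atTop hcpos tendsto_inv_nhdsGT_zero
      have h2 := (aux_tail hg0_integrable).comp h1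
      have := h2.const_mul M'
      simpa using this
    apply squeeze_zero_norm' _ htail
    filter_upwards [self_mem_nhdsWithin] with γ hγ
    have hγ : (0:ℝ) < γ := hγ
    have hb1 : ‖∫ w in Ioi c, deriv f (ℓ + w) * g0 (w / γ)‖
        ≤ ∫ w in Ioi c, M' * g0 (w / γ) := by
      apply norm_integral_le_of_norm_le ((hgγ_Ioi hγ hcpos.le).const_mul M')
      refine (ae_restrict_iff' measurableSet_Ioi).2 (.of_forall fun w hw => ?_)
      have hw0 : (0:ℝ) ≤ g0 (w / γ) :=
        (hg0_pos _ (mem_Ici.2 (div_nonneg (hcpos.le.trans (le_of_lt hw)) hγ.le))).le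
      rw [Real.norm_eq_abs, abs_mul, abs_of_nonneg hw0]
      exact mul_le_mul_of_nonneg_right (hM' _) hw0
    have hb2 : (∫ w in Ioi c, M' * g0 (w / γ)) = M' * (γ * ∫ u in Ioi (c * γ⁻¹), g0 u) := by
      rw [integral_const_mul]
      congr 1
      have h := integral_comp_mul_right_Ioi g0 c (inv_pos.2 hγ)
      simp only [smul_eq_mul, inv_inv] at h
      rw [← h]
      simp only [div_eq_mul_inv]
    have htailnn : (0:ℝ) ≤ ∫ u in Ioi (c * γ⁻¹), g0 u := by
      apply setIntegral_nonneg measurableSet_Ioi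
      intro u hu
      exact (hg0_pos _ (mem_Ici.2 ((mul_nonneg hcpos.le (inv_nonneg.2 hγ.le)).trans hu.le))).le
    rw [norm_div, Real.norm_of_nonneg hγ.le, div_le_iff₀ hγ]
    calc ‖∫ w in Ioi c, deriv f (ℓ + w) * g0 (w / γ)‖
        ≤ ∫ w in Ioi c, M' * g0 (w / γ) := hb1
      _ = M' * (γ * ∫ u in Ioi (c * γ⁻¹), g0 u) := hb2
      _ = M' * (∫ u in Ioi (c * γ⁻¹), g0 u) * γ := by ring
  have hP3 : Tendsto (fun γ : ℝ => f (ℓ + c) * g0 (c / γ) * (1 / 2) / γ) (𝓝[>] 0) (𝓝 0) := by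
    obtain ⟨C, hC⟩ := hg0_decay.bound
    have h1 : Tendsto (fun γ : ℝ => c / γ) (𝓝[>] 0) atTop := by
      simpa [div_eq_mul_inv] using Tendsto.const_mul_atTop hcpos tendsto_inv_nhdsGT_zero
    have hb : Tendsto (fun γ : ℝ => |f (ℓ + c)| * C / (2 * c ^ 2) * γ) (𝓝[>] 0) (𝓝 0) := by
      have hco : Continuous fun γ : ℝ => |f (ℓ + c)| * C / (2 * c ^ 2) * γ :=
        continuous_const.mul continuous_id
      have := hco.tendsto 0
      simp only [mul_zero] at this
      exact this.mono_left nhdsWithin_le_nhds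
    apply squeeze_zero_norm' _ hb
    filter_upwards [h1.eventually hC, self_mem_nhdsWithin] with γ hγC hγ
    have hγ : (0:ℝ) < γ := hγ
    have hnorm : ‖(1:ℝ) / (c / γ) ^ 2‖ = γ ^ 2 / c ^ 2 := by
      rw [Real.norm_eq_abs, abs_of_nonneg (by positivity)]
      rw [div_pow, one_div, inv_div]
    rw [hnorm] at hγC
    have hgabs : |g0 (c / γ)| ≤ C * (γ ^ 2 / c ^ 2) := by
      simpa [Real.norm_eq_abs] using hγC
    have hexp : ‖f (ℓ + c) * g0 (c / γ) * (1 / 2) / γ‖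
        = |f (ℓ + c)| * |g0 (c / γ)| * (1 / 2) / γ := by
      rw [Real.norm_eq_abs, abs_div, abs_of_pos hγ, abs_mul, abs_mul,
        abs_of_pos (show (0:ℝ) < 1 / 2 by norm_num)]
    rw [hexp]
    have step : |f (ℓ + c)| * |g0 (c / γ)| * (1 / 2) / γ
        ≤ |f (ℓ + c)| * (C * (γ ^ 2 / c ^ 2)) * (1 / 2) / γ := by
      gcongr
    refine step.trans (le_of_eq ?_)
    field_simp
  -- combine
  have hcomb := (hP1.sub hP2).sub hP3
  rw [sub_zero, sub_zero] at hcomb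
  refine hcomb.congr' ?_
  filter_upwards [self_mem_nhdsWithin] with γ hγ
  have hγ : (0:ℝ) < γ := hγ
  rw [aux_deriv f hf_smooth hM hM' g0 hg0_cont hg0_pos hg0_le_one hg0_integrable ℓ r hℓr γ hγ]
  rw [← hc]
  ring
end
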